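/- arXiv:2011.12822 — 6 statements merged into one kernel-verified Lean document; each statement's English description precedes it below -/
import Mathlib

section
/- Every nonempty binary word (over a two-letter alphabet) has exactly one square-free reduct; that is, for every nonempty word W over a two-letter alphabet, the set of square-free words reachable from W by finitely many square reductions has cardinality exactly 1. -/
/-- A single square reduction: a word `U ++ (X ++ X) ++ V` (with `X` nonempty)
is replaced by `U ++ X ++ V`. -/
def Step {α : Type*} (W W' : List α) : Prop :=
  ∃ U X V : List α, X ≠ [] ∧ W = U ++ (X ++ X) ++ V ∧ W' = U ++ X ++ V

/-- `Reaches W W'` : `W'` is obtainable from `W` by a finite sequence of square reductions. -/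
def Reaches {α : Type*} (W W' : List α) : Prop := Relation.ReflTransGen Step W W'

/-- A word is square-free if it contains no square `X ++ X` (with `X` nonempty) as a factor. -/
def SquareFree {α : Type*} (W : List α) : Prop :=
  ∀ X : List α, X ≠ [] → ¬ (X ++ X) <:+: W

/-- The set of square-free reducts of `W`. -/
def Reducts {α : Type*} (W : List α) : Set (List α) := {R | Reaches W R ∧ SquareFree R}

/-- Invariant: head, last, and letter content. -/
def inv2 (W : List (Fin 2)) : Option (Fin 2) × Option (Fin 2) × Bool × Bool :=
  (W.head?, W.getLast?, decide ((0 : Fin 2) ∈ W), decide ((1 : Fin 2) ∈ W))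

lemma step_head? {α : Type*} {W W' : List α} (h : Step W W') : W.head? = W'.head? := by
  obtain ⟨U, X, V, hX, rfl, rfl⟩ := h
  cases U with
  | nil =>
    cases X with
    | nil => simp at hX
    | cons x xs => simp
  | cons u us => simp

lemma step_reverse {α : Type*} {W W' : List α} (h : Step W W') :
    Step W.reverse W'.reverse := by
  obtain ⟨U, X, V, hX, rfl, rfl⟩ := h
  exact ⟨V.reverse, X.reverse, U.reverse, by simpa using hX, by simp, by simp⟩

lemma step_mem {α : Type*} {W W' : List α} (h : Step W W') (a : α) : a ∈ W ↔ a ∈ W' := by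
  obtain ⟨U, X, V, hX, rfl, rfl⟩ := h
  simp only [List.mem_append]
  tauto

lemma step_inv2 {W W' : List (Fin 2)} (h : Step W W') : inv2 W = inv2 W' := by
  have h1 := step_head? h
  have h2 := step_head? (step_reverse h)
  rw [List.head?_reverse, List.head?_reverse] at h2
  have h3 := step_mem h 0
  have h4 := step_mem h 1
  simp [inv2, h1, h2, h3, h4]

lemma reaches_inv2 {W W' : List (Fin 2)} (h : Reaches W W') : inv2 W = inv2 W' := by
  induction h with
  | refl => rfl
  | tail _ hstep ih => exact ih.trans (step_inv2 hstep)

lemma inv2_ne_nil {A B : List (Fin 2)} (h : inv2 A = inv2 B) (hB : B ≠ []) : A ≠ [] := by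
  intro hA
  subst hA
  cases B with
  | nil => exact hB rfl
  | cons b bs => simp [inv2] at h

/-- Enumeration of square-free binary words. -/
lemma sf_mem (W : List (Fin 2)) (h : SquareFree W) :
    W ∈ [([] : List (Fin 2)), [0], [1], [0, 1], [1, 0], [0, 1, 0], [1, 0, 1]] := by
  have two : ∀ x : Fin 2, x = 0 ∨ x = 1 := by decide
  match W with
  | [] => simp
  | [a] => rcases two a with rfl | rfl <;> simp
  | [a, b] =>
    have hab : a ≠ b := fun e => h [a] (by simp) ⟨[], [], by simp [e]⟩
    rcases two a with rfl | rfl <;> rcases two b with rfl | rfl <;> simp_all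
  | [a, b, c] =>
    have hab : a ≠ b := fun e => h [a] (by simp) ⟨[], [c], by simp [e]⟩
    have hbc : b ≠ c := fun e => h [b] (by simp) ⟨[a], [], by simp [e]⟩
    rcases two a with rfl | rfl <;> rcases two b with rfl | rfl <;>
      rcases two c with rfl | rfl <;> simp_all
  | a :: b :: c :: d :: t =>
    exfalso
    have hab : a ≠ b := fun e => h [a] (by simp) ⟨[], c :: d :: t, by simp [e]⟩
    have hbc : b ≠ c := fun e => h [b] (by simp) ⟨[a], d :: t, by simp [e]⟩
    have hcd : c ≠ d := fun e => h [c] (by simp) ⟨[a, b], t, by simp [e]⟩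
    have hca : c = a := by
      rcases two a with rfl | rfl <;> rcases two b with rfl | rfl <;>
        rcases two c with rfl | rfl <;> simp_all
    have hdb : d = b := by
      rcases two b with rfl | rfl <;> rcases two c with rfl | rfl <;>
        rcases two d with rfl | rfl <;> simp_all
    exact h [a, b] (by simp) ⟨[], t, by simp [hca, hdb]⟩

lemma inj_on_sf {A B : List (Fin 2)} (hA : SquareFree A) (hB : SquareFree B)
    (hne : A ≠ []) (hinv : inv2 A = inv2 B) : A = B := by
  have hA' := sf_mem A hA
  have hB' := sf_mem B hB
  fin_cases hA' <;> fin_cases hB' <;>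
    first
      | rfl
      | (exact absurd rfl hne)
      | (exfalso; revert hinv; decide)

lemma exists_reduct (W : List (Fin 2)) : ∃ R, Reaches W R ∧ SquareFree R := by
  generalize hn : W.length = n
  induction n using Nat.strong_induction_on generalizing W with
  | _ n ih =>
    by_cases h : SquareFree W
    · exact ⟨W, Relation.ReflTransGen.refl, h⟩
    · unfold SquareFree at h
      push_neg at h
      obtain ⟨X, hX, U, V, hUV⟩ := h
      have hstep : Step W (U ++ X ++ V) := ⟨U, X, V, hX, hUV.symm, rfl⟩
      have hlen : (U ++ X ++ V).length < n := by
        subst hn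
        rw [← hUV]
        have : 0 < X.length := List.length_pos_iff.mpr hX
        simp [List.length_append]
        omega
      obtain ⟨R, hR, hsf⟩ := ih _ hlen (U ++ X ++ V) rfl
      exact ⟨R, Relation.ReflTransGen.head hstep hR, hsf⟩

/-- Every nonempty binary word has exactly one square-free reduct. -/
theorem binary_unique_reduct (W : List (Fin 2)) (hW : W ≠ []) :
    (Reducts W).ncard = 1 := by
  obtain ⟨R, hR, hsf⟩ := exists_reduct W
  have hWR : inv2 W = inv2 R := reaches_inv2 hR
  have hRne : R ≠ [] := inv2_ne_nil hWR.symm hW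
  have hset : Reducts W = {R} := by
    ext A
    constructor
    · rintro ⟨hrA, hsfA⟩
      have h1 : inv2 A = inv2 R := (reaches_inv2 hrA).symm.trans hWR
      have hAne : A ≠ [] := inv2_ne_nil h1 hRne
      exact inj_on_sf hsfA hsf hAne h1
    · rintro rfl
      exact ⟨hR, hsf⟩
  rw [hset, Set.ncard_singleton]
end

section
/- The morphism φ over the alphabet {a,b,c} defined by φ(a) = abacabcbacabacbabc, φ(b) = abacabcbacbcacbabc, φ(c) = abacbcacbacabcbabc is square-free: the image under φ of every square-free word over {a,b,c} is square-free. -/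
def Φfn : Fin 3 → List (Fin 3) :=
  ![[0,1,0,2,0,1,2,1,0,2,0,1,0,2,1,0,1,2],
    [0,1,0,2,0,1,2,1,0,2,1,2,0,2,1,0,1,2],
    [0,1,0,2,1,2,0,2,1,0,2,0,1,2,1,0,1,2]]

def sqB (l : List (Fin 3)) : Bool :=
  l.tails.all fun s => (List.range (s.length/2 + 1)).all fun b =>
    b == 0 || s.take b != (s.drop b).take b

def EW : ℕ → List (List (Fin 3))
  | 0 => [[]]
  | n+1 => (EW n).flatMap fun t => [0::t, 1::t, 2::t]

lemma mem_EW : ∀ (n : ℕ) (t : List (Fin 3)), t.length = n → t ∈ EW n := by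
  intro n
  induction n with
  | zero =>
    intro t ht
    rw [List.length_eq_zero_iff] at ht
    simp [ht, EW]
  | succ n ih =>
    intro t ht
    match t with
    | x :: t' =>
      have h' : t' ∈ EW n := ih t' (by simpa using ht)
      simp only [EW, List.mem_flatMap]
      exact ⟨t', h', by fin_cases x <;> simp⟩

set_option maxRecDepth 100000 in
set_option maxHeartbeats 4000000 in
lemma checkA : ((List.range 6).all fun n =>
    (EW n).all fun t => !sqB t || sqB (t.flatMap Φfn)) = true := by decide

lemma sync : ∀ (x y z : Fin 3) (o : Fin 17),
    ((Φfn x ++ Φfn y).drop (o.1+1)).take 18 ≠ Φfn z := by decide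

lemma lemF : ∀ (x y z : Fin 3) (t : Fin 17),
    (Φfn x).drop (t.1+1) = (Φfn y).drop (t.1+1) →
    (Φfn y).take (t.1+1) = (Φfn z).take (t.1+1) → x = y ∨ y = z := by decide

lemma injΦ : ∀ x y : Fin 3, Φfn x = Φfn y → x = y := by decide

lemma lenΦ : ∀ x, (Φfn x).length = 18 := by decide

lemma seg_infix {α : Type*} (l : List α) (a b : ℕ) : (l.drop a).take b <:+: l :=
  (List.take_prefix b (l.drop a)).isInfix.trans (l.drop_suffix a).isInfix

lemma sqfree_infix {α : Type*} {l u : List α} (h : SquareFree l) (hu : u <:+: l) :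
    SquareFree u :=
  fun X hX hinf => h X hX (hinf.trans hu)

lemma not_sqfree_of_seg {α : Type*} (l : List α) (a b : ℕ) (hb : b ≠ 0)
    (hlen : a + b + b ≤ l.length)
    (h : (l.drop a).take b = (l.drop (a+b)).take b) : ¬ SquareFree l := by
  intro hsf
  have hlb : ((l.drop a).take b).length = b := by
    rw [List.length_take, List.length_drop]; omega
  have hne : (l.drop a).take b ≠ [] := by
    intro hnil; rw [hnil] at hlb; simp at hlb; omega
  have h2 : (l.drop a).take (b+b) = (l.drop a).take b ++ (l.drop a).take b := by
    rw [List.take_add, List.drop_drop, ← h]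
  exact hsf _ hne (h2 ▸ seg_infix l a (b+b))

lemma seg_append {α : Type*} (X R : List α) (a b : ℕ) (h : a + b ≤ X.length) :
    ((X ++ R).drop a).take b = (X.drop a).take b := by
  rw [List.drop_append, List.take_append]
  have h1 : b - (X.drop a).length = 0 := by rw [List.length_drop]; omega
  rw [h1, List.take_zero, List.append_nil]

lemma per' {α : Type*} (U X V w : List α) (hw : U ++ (X ++ X) ++ V = w)
    (i b : ℕ) (h1 : U.length ≤ i) (h2 : i + b ≤ U.length + X.length) :
    (w.drop i).take b = (w.drop (i + X.length)).take b := by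
  have hdropgen : ∀ j : ℕ, w.drop (U.length + j) = (X ++ (X ++ V)).drop j := by
    intro j
    rw [← hw, List.append_assoc, List.append_assoc,
        List.drop_append,
        List.drop_eq_nil_of_le (by omega), List.nil_append, Nat.add_sub_cancel_left]
  have i1 : i = U.length + (i - U.length) := by omega
  rw [i1, hdropgen,
      show U.length + (i - U.length) + X.length
        = U.length + ((i - U.length) + X.length) from by omega,
      hdropgen]
  rw [seg_append X (X ++ V) (i - U.length) b (by omega)]
  rw [List.drop_append,
      show X.drop (i - U.length + X.length) = [] from List.drop_eq_nil_of_le (by omega),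
      List.nil_append,
      show i - U.length + X.length - X.length = i - U.length from by omega,
      seg_append X V (i - U.length) b (by omega)]

lemma sqfree_of_sqB {l : List (Fin 3)} (h : sqB l = true) : SquareFree l := by
  intro X hX hinf
  obtain ⟨U, V, hw⟩ := hinf
  have hℓ0 : X.length ≠ 0 := fun h0 => hX (List.length_eq_zero_iff.mp h0)
  have hmem : ((X ++ X) ++ V) ∈ l.tails := by
    rw [List.mem_tails]
    exact ⟨U, by rw [← List.append_assoc]; exact hw⟩
  rw [sqB, List.all_eq_true] at h
  have h2 := h _ hmem
  rw [List.all_eq_true] at h2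
  have hb : X.length ∈ List.range ((((X ++ X) ++ V).length)/2 + 1) := by
    rw [List.mem_range]
    simp only [List.length_append]
    omega
  have h3 := h2 _ hb
  simp only [Bool.or_eq_true, beq_iff_eq, bne_iff_ne, ne_eq] at h3
  rcases h3 with h3 | h3
  · exact hℓ0 h3
  · apply h3
    have e1 : ((X ++ X) ++ V).take X.length = X := by
      rw [List.append_assoc]; exact List.take_left' rfl
    have e2 : (((X ++ X) ++ V).drop X.length).take X.length = X := by
      rw [List.append_assoc, List.drop_left]; exact List.take_left' rfl
    rw [e1, e2]

lemma sqB_of_sqfree {l : List (Fin 3)} (h : SquareFree l) : sqB l = true := by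
  rw [sqB, List.all_eq_true]
  intro s hs
  rw [List.all_eq_true]
  intro b hb
  simp only [Bool.or_eq_true, beq_iff_eq, bne_iff_ne, ne_eq]
  by_contra hc
  push_neg at hc
  obtain ⟨hb0, heq⟩ := hc
  rw [List.mem_tails] at hs
  obtain ⟨U, hU⟩ := hs
  have hsa : s = l.drop U.length := by rw [← hU, List.drop_left]
  rw [List.mem_range] at hb
  have hslen : s.length = l.length - U.length := by rw [hsa, List.length_drop]
  have hU' : U.length ≤ l.length := by
    rw [← hU, List.length_append]; omega
  refine not_sqfree_of_seg l U.length b hb0 (by omega) ?_ h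
  have e : l.drop (U.length + b) = s.drop b := by rw [hsa, List.drop_drop]
  rw [← hsa, e]
  exact heq

lemma flatMap_len (W : List (Fin 3)) : (W.flatMap Φfn).length = 18 * W.length := by
  induction W with
  | nil => simp
  | cons x W ih =>
    rw [List.flatMap_cons, List.length_append, lenΦ, ih, List.length_cons]
    ring

lemma flatMap_drop : ∀ (W : List (Fin 3)) (k : ℕ),
    (W.flatMap Φfn).drop (18*k) = (W.drop k).flatMap Φfn := by
  intro W
  induction W with
  | nil => intro k; simp
  | cons x W ih =>
    intro k
    cases k with
    | zero => simp
    | succ k =>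
      rw [List.flatMap_cons, List.drop_append,
          List.drop_eq_nil_of_le (by rw [lenΦ]; omega), List.nil_append, lenΦ,
          show 18*(k+1) - 18 = 18*k from by omega, ih k, List.drop_succ_cons]

lemma flatMap_take : ∀ (W : List (Fin 3)) (n : ℕ),
    (W.flatMap Φfn).take (18*n) = (W.take n).flatMap Φfn := by
  intro W
  induction W with
  | nil => intro n; simp
  | cons x W ih =>
    intro n
    cases n with
    | zero => simp
    | succ n =>
      rw [List.flatMap_cons, List.take_append,
          List.take_of_length_le (by rw [lenΦ]; omega), lenΦ,
          show 18*(n+1) - 18 = 18*n from by omega, ih n, List.take_succ_cons,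
          List.flatMap_cons]

lemma block (W : List (Fin 3)) (k : ℕ) (h : k < W.length) :
    ((W.flatMap Φfn).drop (18*k)).take 18 = Φfn W[k] := by
  rw [flatMap_drop, List.drop_eq_getElem_cons h, List.flatMap_cons,
      List.take_left' (lenΦ _)]

lemma main (W : List (Fin 3)) (hW : SquareFree W) : SquareFree (W.flatMap Φfn) := by
  intro X hX hinf
  obtain ⟨U, V, hw⟩ := hinf
  have hℓ0 : X.length ≠ 0 := fun h0 => hX (List.length_eq_zero_iff.mp h0)
  have hwlen : (W.flatMap Φfn).length = 18 * W.length := flatMap_len W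
  have hsz : U.length + X.length + X.length + V.length = 18 * W.length := by
    have := congrArg List.length hw
    simp only [List.length_append] at this
    omega
  have per : ∀ i b, U.length ≤ i → i + b ≤ U.length + X.length →
      ((W.flatMap Φfn).drop i).take b = ((W.flatMap Φfn).drop (i + X.length)).take b :=
    fun i b h1 h2 => per' U X V _ hw i b h1 h2
  have hdropp : (W.flatMap Φfn).drop U.length = X ++ (X ++ V) := by
    rw [← hw, List.append_assoc, List.append_assoc, List.drop_left]
  have hXX : X ++ X = ((W.flatMap Φfn).drop U.length).take (X.length + X.length) := by
    rw [hdropp, ← List.append_assoc]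
    exact (List.take_left' (by rw [List.length_append])).symm
  by_cases hc : X.length ≤ 34
  · -- short squares: land inside the image of a square-free factor of length ≤ 5
    set k₀ := U.length / 18 with hk₀def
    set n := min 5 (W.length - k₀) with hndef
    have hmin1 : n ≤ 5 := Nat.min_le_left _ _
    have hmin2 : n ≤ W.length - k₀ := Nat.min_le_right _ _
    have hmin3 : n = 5 ∨ n = W.length - k₀ := min_choice _ _
    have hbound : (U.length - 18*k₀) + (X.length + X.length) ≤ 18*n := by omega
    set t := (W.drop k₀).take n with htdef
    have htlen : t.length = n := by
      rw [htdef, List.length_take, List.length_drop]; omega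
    have himg : t.flatMap Φfn = ((W.flatMap Φfn).drop (18*k₀)).take (18*n) := by
      rw [flatMap_drop, flatMap_take]
    have hinf2 : X ++ X <:+: t.flatMap Φfn := by
      rw [himg]
      have e2 : ((((W.flatMap Φfn).drop (18*k₀)).take (18*n)).drop (U.length - 18*k₀)).take
          (X.length + X.length) = X ++ X := by
        rw [List.drop_take, List.take_take, inf_eq_left.mpr (by omega),
            List.drop_drop, show 18*k₀ + (U.length - 18*k₀) = U.length from by omega]
        exact hXX.symm
      rw [← e2]
      exact seg_infix _ _ _
    have htsf : SquareFree t := sqfree_infix hW (seg_infix W k₀ n)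
    have hA := checkA
    rw [List.all_eq_true] at hA
    have h6 := hA n (List.mem_range.mpr (by omega))
    rw [List.all_eq_true] at h6
    have h7 := h6 t (mem_EW n t htlen)
    simp only [Bool.or_eq_true, Bool.not_eq_true'] at h7
    rcases h7 with h7 | h7
    · rw [sqB_of_sqfree htsf] at h7; exact absurd h7 (by simp)
    · exact sqfree_of_sqB h7 X hX hinf2
  · -- long squares: the period is a multiple of 18 and projects to a square in W
    have hdvd : 18 ∣ X.length := by
      set k := (U.length + X.length + 17) / 18 with hkdef
      have hk1 : U.length + X.length ≤ 18 * k := by omega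
      have hk2 : 18 * k ≤ U.length + X.length + 17 := by omega
      have hkW : k < W.length := by omega
      have hb1 := block W k hkW
      have hper : ((W.flatMap Φfn).drop (18*k - X.length)).take 18
          = ((W.flatMap Φfn).drop (18*k)).take 18 := by
        have := per (18*k - X.length) 18 (by omega) (by omega)
        rwa [show 18*k - X.length + X.length = 18*k from by omega] at this
      set j := (18*k - X.length) / 18 with hjdef
      set o := (18*k - X.length) % 18 with hodef
      have hjo : 18*j + o = 18*k - X.length := by omega
      have ho18 : o < 18 := by omega
      by_cases ho0 : o = 0
      · exact ⟨k - j, by omega⟩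
      · exfalso
        have hjW : j < W.length := by omega
        have hjW1 : j + 1 < W.length := by omega
        have hbj : ((W.flatMap Φfn).drop (18*j)).take 36 = Φfn W[j] ++ Φfn W[j+1] := by
          rw [flatMap_drop, List.drop_eq_getElem_cons hjW, List.drop_eq_getElem_cons hjW1,
              List.flatMap_cons, List.flatMap_cons, ← List.append_assoc,
              List.take_left' (by rw [List.length_append, lenΦ, lenΦ])]
        have hocc : ((Φfn W[j] ++ Φfn W[j+1]).drop o).take 18 = Φfn W[k] := by
          rw [← hbj, List.drop_take, List.take_take, inf_eq_left.mpr (by omega),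
              List.drop_drop, show 18*j + o = 18*k - X.length from hjo, hper, hb1]
        exact sync (W[j]) (W[j+1]) (W[k]) ⟨o - 1, by omega⟩
          (by rwa [show (o-1)+1 = o from by omega])
    obtain ⟨m, hm⟩ := hdvd
    have hm2 : 2 ≤ m := by omega
    have blockEq : ∀ k', U.length ≤ 18*k' →
        18*k' + 18 + X.length ≤ U.length + 2*X.length → W[k']? = W[k'+m]? := by
      intro k' h1 h2
      have hk'W : k' < W.length := by omega
      have hkmW : k' + m < W.length := by omega
      have e1 : ((W.flatMap Φfn).drop (18*k')).take 18
          = ((W.flatMap Φfn).drop (18*(k'+m))).take 18 := by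
        have := per (18*k') 18 h1 (by omega)
        rwa [show 18*k' + X.length = 18*(k'+m) from by omega] at this
      have e2 : Φfn (W[k']'hk'W) = Φfn (W[k'+m]'hkmW) := by
        rw [← block W k' hk'W, ← block W (k'+m) hkmW]; exact e1
      have e3 := injΦ _ _ e2
      rw [List.getElem?_eq_getElem hk'W, List.getElem?_eq_getElem hkmW, e3]
    have sqW : ∀ k₀, k₀ + m + m ≤ W.length →
        (∀ i, i < m → W[k₀+i]? = W[k₀+m+i]?) → False := by
      intro k₀ hk₀ hall
      refine not_sqfree_of_seg W k₀ m (by omega) (by omega) ?_ hW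
      apply List.ext_getElem?
      intro i
      rw [List.getElem?_take, List.getElem?_take, List.getElem?_drop, List.getElem?_drop]
      by_cases him : i < m
      · rw [if_pos him, if_pos him]
        exact hall i him
      · rw [if_neg him, if_neg him]
    set q := U.length / 18 with hqdef
    set t' := U.length % 18 with ht'def
    have hpq : U.length = 18*q + t' ∧ t' < 18 := by omega
    by_cases ht0 : t' = 0
    · apply sqW q (by omega)
      intro i him
      have := blockEq (q+i) (by omega) (by omega)
      rwa [show q+i+m = q+m+i from by omega] at this
    · have hqW : q < W.length := by omega
      have hqmW : q + m < W.length := by omega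
      have hq2mW : q + 2*m < W.length := by omega
      have hhead : (Φfn (W[q]'hqW)).drop t' = (Φfn (W[q+m]'hqmW)).drop t' := by
        have e1 : (Φfn (W[q]'hqW)).drop t'
            = ((W.flatMap Φfn).drop U.length).take (18 - t') := by
          rw [← block W q hqW, List.drop_take, List.drop_drop,
              show 18*q + t' = U.length from by omega]
        have e2 : (Φfn (W[q+m]'hqmW)).drop t'
            = ((W.flatMap Φfn).drop (U.length + X.length)).take (18 - t') := by
          rw [← block W (q+m) hqmW, List.drop_take, List.drop_drop,
              show 18*(q+m) + t' = U.length + X.length from by omega]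
        rw [e1, e2]
        exact per U.length (18 - t') (le_refl _) (by omega)
      have htail : (Φfn (W[q+m]'hqmW)).take t' = (Φfn (W[q+2*m]'hq2mW)).take t' := by
        have e2 : (Φfn (W[q+m]'hqmW)).take t'
            = ((W.flatMap Φfn).drop (U.length + X.length - t')).take t' := by
          rw [← block W (q+m) hqmW, List.take_take, inf_eq_left.mpr (by omega),
              show 18*(q+m) = U.length + X.length - t' from by omega]
        have e3 : (Φfn (W[q+2*m]'hq2mW)).take t'
            = ((W.flatMap Φfn).drop (U.length + X.length - t' + X.length)).take t' := by
          rw [← block W (q+2*m) hq2mW, List.take_take, inf_eq_left.mpr (by omega),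
              show 18*(q+2*m) = U.length + X.length - t' + X.length from by omega]
        rw [e2, e3]
        exact per (U.length + X.length - t') t' (by omega) (by omega)
      have hF := lemF (W[q]'hqW) (W[q+m]'hqmW) (W[q+2*m]'hq2mW) ⟨t' - 1, by omega⟩
        (by rwa [show (t'-1)+1 = t' from by omega])
        (by rwa [show (t'-1)+1 = t' from by omega])
      rcases hF with hxy | hyz
      · apply sqW q (by omega)
        intro i him
        rcases Nat.eq_zero_or_pos i with hi0 | hip
        · subst hi0
          simp only [Nat.add_zero]
          rw [List.getElem?_eq_getElem hqW, List.getElem?_eq_getElem hqmW, hxy]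
        · have := blockEq (q+i) (by omega) (by omega)
          rwa [show q+i+m = q+m+i from by omega] at this
      · apply sqW (q+1) (by omega)
        intro i him
        by_cases hil : i = m - 1
        · subst hil
          rw [show q+1+(m-1) = q+m from by omega, show q+1+m+(m-1) = q+2*m from by omega,
              List.getElem?_eq_getElem hqmW, List.getElem?_eq_getElem hq2mW, hyz]
        · have := blockEq (q+1+i) (by omega) (by omega)
          rwa [show q+1+i+m = q+1+m+i from by omega] at this

/-- The morphism `φ` on `{a, b, c}` (encoded as `Fin 3` with `a = 0`, `b = 1`, `c = 2`)
given by `a ↦ abacabcbacabacbabc`, `b ↦ abacabcbacbcacbabc`, `c ↦ abacbcacbacabcbabc`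
is square-free. -/
theorem phi_squarefree_morphism
    (φ : Fin 3 → List (Fin 3))
    (hφ : φ = ![[0,1,0,2,0,1,2,1,0,2,0,1,0,2,1,0,1,2],
                [0,1,0,2,0,1,2,1,0,2,1,2,0,2,1,0,1,2],
                [0,1,0,2,1,2,0,2,1,0,2,0,1,2,1,0,1,2]]) :
    ∀ W : List (Fin 3), SquareFree W → SquareFree (W.flatMap φ) := by
  subst hφ
  have e : Φfn = ![[0,1,0,2,0,1,2,1,0,2,0,1,0,2,1,0,1,2],
                [0,1,0,2,0,1,2,1,0,2,1,2,0,2,1,0,1,2],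
                [0,1,0,2,1,2,0,2,1,0,2,0,1,2,1,0,1,2]] := rfl
  rw [← e]
  exact fun W hW => main W hW
end

section
/- Let A = abacabcbacabacbabc, B = abacabcbacbcacbabc, and D = abacabcbabcbabacabacacbcacbabcbababc, words over the alphabet {a,b,c}. Then D can be transformed into A by a finite sequence of square reductions, and D can also be transformed into B by a finite sequence of square reductions. -/
lemma reach_A : Reaches ([0,1,0,2,0,1,2,1,0,1,2,1,0,1,0,2,0,1,0,2,0,2,1,2,0,2,1,0,1,2,1,0,1,0,1,2] : List (Fin 3)) [0,1,0,2,0,1,2,1,0,2,0,1,0,2,1,0,1,2] := by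
  have s0 : Step ([0,1,0,2,0,1,2,1,0,1,2,1,0,1,0,2,0,1,0,2,0,2,1,2,0,2,1,0,1,2,1,0,1,0,1,2] : List (Fin 3)) [0,1,0,2,0,1,2,1,0,1,2,1,0,2,0,1,0,2,0,2,1,2,0,2,1,0,1,2,1,0,1,0,1,2] := ⟨[0,1,0,2,0,1,2,1,0,1,2], [1,0], [2,0,1,0,2,0,2,1,2,0,2,1,0,1,2,1,0,1,0,1,2], by decide, by decide, by decide⟩
  have s1 : Step ([0,1,0,2,0,1,2,1,0,1,2,1,0,2,0,1,0,2,0,2,1,2,0,2,1,0,1,2,1,0,1,0,1,2] : List (Fin 3)) [0,1,0,2,0,1,2,1,0,1,2,1,0,2,0,1,0,2,0,2,1,2,0,2,1,0,1,2,1,0,1,2] := ⟨[0,1,0,2,0,1,2,1,0,1,2,1,0,2,0,1,0,2,0,2,1,2,0,2,1,0,1,2], [1,0], [1,2], by decide, by decide, by decide⟩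
  have s2 : Step ([0,1,0,2,0,1,2,1,0,1,2,1,0,2,0,1,0,2,0,2,1,2,0,2,1,0,1,2,1,0,1,2] : List (Fin 3)) [0,1,0,2,0,1,2,1,0,1,2,1,0,2,0,1,0,2,0,2,1,2,0,2,1,0,1,2] := ⟨[0,1,0,2,0,1,2,1,0,1,2,1,0,2,0,1,0,2,0,2,1,2,0,2], [1,0,1,2], [], by decide, by decide, by decide⟩
  have s3 : Step ([0,1,0,2,0,1,2,1,0,1,2,1,0,2,0,1,0,2,0,2,1,2,0,2,1,0,1,2] : List (Fin 3)) [0,1,0,2,0,1,2,1,0,2,0,1,0,2,0,2,1,2,0,2,1,0,1,2] := ⟨[0,1,0,2,0], [1,2,1,0], [2,0,1,0,2,0,2,1,2,0,2,1,0,1,2], by decide, by decide, by decide⟩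
  have s4 : Step ([0,1,0,2,0,1,2,1,0,2,0,1,0,2,0,2,1,2,0,2,1,0,1,2] : List (Fin 3)) [0,1,0,2,0,1,2,1,0,2,0,1,0,2,0,2,1,0,1,2] := ⟨[0,1,0,2,0,1,2,1,0,2,0,1,0], [2,0,2,1], [0,1,2], by decide, by decide, by decide⟩
  have s5 : Step ([0,1,0,2,0,1,2,1,0,2,0,1,0,2,0,2,1,0,1,2] : List (Fin 3)) [0,1,0,2,0,1,2,1,0,2,0,1,0,2,1,0,1,2] := ⟨[0,1,0,2,0,1,2,1,0,2,0,1], [0,2], [1,0,1,2], by decide, by decide, by decide⟩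
  exact (Relation.ReflTransGen.head s0 (Relation.ReflTransGen.head s1 (Relation.ReflTransGen.head s2 (Relation.ReflTransGen.head s3 (Relation.ReflTransGen.head s4 (Relation.ReflTransGen.head s5 Relation.ReflTransGen.refl))))))
lemma reach_B : Reaches ([0,1,0,2,0,1,2,1,0,1,2,1,0,1,0,2,0,1,0,2,0,2,1,2,0,2,1,0,1,2,1,0,1,0,1,2] : List (Fin 3)) [0,1,0,2,0,1,2,1,0,2,1,2,0,2,1,0,1,2] := by
  have s0 : Step ([0,1,0,2,0,1,2,1,0,1,2,1,0,1,0,2,0,1,0,2,0,2,1,2,0,2,1,0,1,2,1,0,1,0,1,2] : List (Fin 3)) [0,1,0,2,0,1,2,1,0,1,2,1,0,1,0,2,0,1,0,2,1,2,0,2,1,0,1,2,1,0,1,0,1,2] := ⟨[0,1,0,2,0,1,2,1,0,1,2,1,0,1,0,2,0,1], [0,2], [1,2,0,2,1,0,1,2,1,0,1,0,1,2], by decide, by decide, by decide⟩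
  have s1 : Step ([0,1,0,2,0,1,2,1,0,1,2,1,0,1,0,2,0,1,0,2,1,2,0,2,1,0,1,2,1,0,1,0,1,2] : List (Fin 3)) [0,1,0,2,0,1,2,1,0,1,0,2,0,1,0,2,1,2,0,2,1,0,1,2,1,0,1,0,1,2] := ⟨[0,1,0,2], [0,1,2,1], [0,1,0,2,0,1,0,2,1,2,0,2,1,0,1,2,1,0,1,0,1,2], by decide, by decide, by decide⟩
  have s2 : Step ([0,1,0,2,0,1,2,1,0,1,0,2,0,1,0,2,1,2,0,2,1,0,1,2,1,0,1,0,1,2] : List (Fin 3)) [0,1,0,2,0,1,2,1,0,1,0,2,0,1,0,2,1,2,0,2,1,0,1,2,1,0,1,2] := ⟨[0,1,0,2,0,1,2,1,0,1,0,2,0,1,0,2,1,2,0,2,1,0,1,2], [1,0], [1,2], by decide, by decide, by decide⟩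
  have s3 : Step ([0,1,0,2,0,1,2,1,0,1,0,2,0,1,0,2,1,2,0,2,1,0,1,2,1,0,1,2] : List (Fin 3)) [0,1,0,2,0,1,2,1,0,1,0,2,0,1,0,2,1,2,0,2,1,0,1,2] := ⟨[0,1,0,2,0,1,2,1,0,1,0,2,0,1,0,2,1,2,0], [2,1,0,1], [2], by decide, by decide, by decide⟩
  have s4 : Step ([0,1,0,2,0,1,2,1,0,1,0,2,0,1,0,2,1,2,0,2,1,0,1,2] : List (Fin 3)) [0,1,0,2,0,1,2,1,0,1,0,2,1,2,0,2,1,0,1,2] := ⟨[0,1,0,2,0,1,2,1], [0,1,0,2], [1,2,0,2,1,0,1,2], by decide, by decide, by decide⟩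
  have s5 : Step ([0,1,0,2,0,1,2,1,0,1,0,2,1,2,0,2,1,0,1,2] : List (Fin 3)) [0,1,0,2,0,1,2,1,0,2,1,2,0,2,1,0,1,2] := ⟨[0,1,0,2,0,1,2], [1,0], [2,1,2,0,2,1,0,1,2], by decide, by decide, by decide⟩
  exact (Relation.ReflTransGen.head s0 (Relation.ReflTransGen.head s1 (Relation.ReflTransGen.head s2 (Relation.ReflTransGen.head s3 (Relation.ReflTransGen.head s4 (Relation.ReflTransGen.head s5 Relation.ReflTransGen.refl))))))


/-- The word `D = abacabcbabcbabacabacacbcacbabcbababc` reduces (by square reductions)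
both to `A = abacabcbacabacbabc` and to `B = abacabcbacbcacbabc`
(letters encoded in `Fin 3` as `a = 0`, `b = 1`, `c = 2`). -/
theorem D_reduces_to_A_and_B
    (A B D : List (Fin 3))
    (hA : A = [0,1,0,2,0,1,2,1,0,2,0,1,0,2,1,0,1,2])
    (hB : B = [0,1,0,2,0,1,2,1,0,2,1,2,0,2,1,0,1,2])
    (hD : D = [0,1,0,2,0,1,2,1,0,1,2,1,0,1,0,2,0,1,0,2,0,2,1,2,0,2,1,0,1,2,1,0,1,0,1,2]) :
    Reaches D A ∧ Reaches D B := by subst hA hB hD; exact ⟨reach_A, reach_B⟩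
end

section
/- Let A = abacabcbacabacbabc, B = abacabcbacbcacbabc, C = abacbcacbacabcbabc, D = abacabcbabcbabacabacacbcacbabcbababc, and let ψ be the morphism over {a,b,c} with ψ(a) = D, ψ(b) = D, ψ(c) = C. Then for every word S over {a,b,c} starting with the letter a, the number of square-free reducts of ψ(S) is at least twice the number of square-free reducts of S, i.e. r(ψ(S)) ≥ 2·r(S). -/
namespace PsiProof

abbrev F3 := Fin 3

/-- base-4 encoding with digits 1..3 -/
def enc : List F3 → ℕ
  | [] => 0
  | x :: w => (x.val + 1) + 4 * enc w

theorem enc_bound : ∀ w : List F3, enc w < 4 ^ w.length := by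
  intro w; induction w with
  | nil => simp [enc]
  | cons x w ih =>
    have hx : x.val < 3 := x.isLt
    simp only [enc, List.length_cons, pow_succ]
    omega

theorem enc_inj : ∀ u v : List F3, enc u = enc v → u = v := by
  intro u; induction u with
  | nil => intro v h; cases v with
    | nil => rfl
    | cons y w => simp only [enc] at h; omega
  | cons x u ih =>
    intro v h; cases v with
    | nil => simp only [enc] at h; omega
    | cons y w =>
      simp only [enc] at h
      have hx : x.val < 3 := x.isLt
      have hy : y.val < 3 := y.isLt
      have h1 : x.val = y.val ∧ enc u = enc w := by omega
      have : x = y := Fin.ext h1.1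
      rw [this, ih w h1.2]

theorem enc_drop : ∀ (p : ℕ) (w : List F3), enc (w.drop p) = enc w / 4 ^ p := by
  intro p; induction p with
  | zero => intro w; simp
  | succ p ih =>
    intro w; cases w with
    | nil => simp [enc, Nat.zero_div]
    | cons x w =>
      have hx : x.val < 3 := x.isLt
      simp only [List.drop_succ_cons, ih w, enc]
      rw [pow_succ, mul_comm (4^p) 4, ← Nat.div_div_eq_div_mul]
      congr 1
      omega

theorem enc_take : ∀ (l : ℕ) (w : List F3), enc (w.take l) = enc w % 4 ^ l := by
  intro l; induction l with
  | zero => intro w; simp [enc, Nat.mod_one]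
  | succ l ih =>
    intro w; cases w with
    | nil => simp [enc]
    | cons x w =>
      have hx : x.val < 3 := x.isLt
      simp only [List.take_succ_cons, enc, ih w]
      have h1 : enc w = 4 ^ l * (enc w / 4 ^ l) + enc w % 4 ^ l := (Nat.div_add_mod _ _).symm
      have h2 : enc w % 4 ^ l < 4 ^ l := Nat.mod_lt _ (Nat.pow_pos (by norm_num))
      rw [pow_succ]
      have e : (x.val + 1) + 4 * enc w
          = ((x.val + 1) + 4 * (enc w % 4 ^ l)) + (enc w / 4 ^ l) * (4 ^ l * 4) := by
        conv_lhs => rw [h1]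
        ring
      have hlt : (x.val + 1) + 4 * (enc w % 4 ^ l) < 4 ^ l * 4 := by omega
      rw [e, Nat.add_mul_mod_self_right, Nat.mod_eq_of_lt hlt]

def chkN (L E : ℕ) : Prop :=
  ∀ p < L, ∀ l < L, 0 < l → p + l + l ≤ L → E / 4 ^ p % 4 ^ l ≠ E / 4 ^ (p + l) % 4 ^ l

instance : DecidablePred fun q : ℕ × ℕ => chkN q.1 q.2 := fun _ => by
  unfold chkN; infer_instance

instance (L E : ℕ) : Decidable (chkN L E) := by unfold chkN; infer_instance

theorem sub_enc (W : List F3) (p l : ℕ) :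
    enc ((W.drop p).take l) = enc W / 4 ^ p % 4 ^ l := by
  rw [enc_take, enc_drop]

theorem chkN_iff (W : List F3) : chkN W.length (enc W) ↔ SquareFree W := by
  constructor
  · intro h X hX hinf
    obtain ⟨s, t, hst⟩ := hinf
    set p := s.length with hp
    set l := X.length with hl
    have hlpos : 0 < l := List.length_pos_iff.mpr hX
    have hW : W = s ++ ((X ++ X) ++ t) := by rw [← hst]; simp
    have hL : W.length = p + (l + l + t.length) := by
      rw [hW]; simp [hp, hl]; omega
    have hdrop : W.drop p = (X ++ X) ++ t := by
      rw [hW, List.drop_left]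
    have h1 : (W.drop p).take l = X := by
      rw [hdrop, List.append_assoc, List.take_left]
    have hdrop2 : W.drop (p + l) = X ++ t := by
      have : W.drop (p + l) = (W.drop p).drop l := by rw [List.drop_drop]
      rw [this, hdrop, List.append_assoc, List.drop_left]
    have h2 : (W.drop (p + l)).take l = X := by rw [hdrop2, List.take_left]
    have := h p (by omega) l (by omega) hlpos (by omega)
    apply this
    rw [← sub_enc, ← sub_enc]
    exact congrArg enc (h1.trans h2.symm)
  · intro hsf p hp l hl h0 hle heq
    have h1 : enc ((W.drop p).take l) = enc ((W.drop (p + l)).take l) := by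
      rw [sub_enc, sub_enc, heq]
    have h2 := enc_inj _ _ h1
    set X := (W.drop p).take l with hX
    have hXlen : X.length = l := by
      rw [hX, List.length_take, List.length_drop]; omega
    have hXne : X ≠ [] := by
      intro h; rw [h] at hXlen; simp at hXlen; omega
    apply hsf X hXne
    refine ⟨W.take p, W.drop (p + l + l), ?_⟩
    have e1 : W.drop p = X ++ W.drop (p + l) := by
      conv_lhs => rw [← List.take_append_drop l (W.drop p)]
      rw [List.drop_drop]
    have e2 : W.drop (p + l) = X ++ W.drop (p + l + l) := by
      conv_lhs => rw [← List.take_append_drop l (W.drop (p + l))]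
      rw [List.drop_drop, ← h2]
    calc W.take p ++ (X ++ X) ++ W.drop (p + l + l)
        = W.take p ++ (X ++ (X ++ W.drop (p + l + l))) := by simp
      _ = W.take p ++ W.drop p := by rw [← e2, ← e1]
      _ = W := List.take_append_drop _ _


def A : List F3 := [0,1,0,2,0,1,2,1,0,2,0,1,0,2,1,0,1,2]
def B : List F3 := [0,1,0,2,0,1,2,1,0,2,1,2,0,2,1,0,1,2]
def Cw : List F3 := [0,1,0,2,1,2,0,2,1,0,2,0,1,2,1,0,1,2]
def Dw : List F3 := [0,1,0,2,0,1,2,1,0,1,2,1,0,1,0,2,0,1,0,2,0,2,1,2,0,2,1,0,1,2,1,0,1,0,1,2]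
def μ : F3 → List F3 := ![A, B, Cw]
def ν : F3 → List F3 := ![B, A, Cw]
def ψ' : F3 → List F3 := ![Dw, Dw, Cw]

def allE : ℕ → List (List F3)
  | 0 => [[]]
  | n+1 => (allE n).flatMap (fun w => [(0:F3)::w, 1::w, 2::w])

theorem mem_allE : ∀ (w : List F3), w ∈ allE w.length := by
  intro w; induction w with
  | nil => simp [allE]
  | cons x w ih =>
    show x :: w ∈ (allE w.length).flatMap _
    rw [List.mem_flatMap]
    refine ⟨w, ih, ?_⟩
    have : x = 0 ∨ x = 1 ∨ x = 2 := by revert x; decide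
    rcases this with h | h | h <;> subst h <;> simp

set_option maxRecDepth 40000 in
theorem sync_check : ∀ x ∈ [A,B,Cw], ∀ y ∈ [A,B,Cw], ∀ z ∈ [A,B,Cw], ∀ t < 19,
    ((x ++ y).drop t).take 18 = z → t = 0 ∨ t = 18 := by decide

set_option maxRecDepth 40000 in
set_option maxHeartbeats 2000000 in
theorem short_check_mu : ∀ n < 4, ∀ w ∈ allE n,
    chkN w.length (enc w) → chkN (w.flatMap μ).length (enc (w.flatMap μ)) := by decide


theorem sf_infix {α : Type*} {W I : List α} (h : SquareFree W) (hI : I <:+: W) :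
    SquareFree I := fun X hX hinf => h X hX (hinf.trans hI)

theorem gE {α : Type*} (l : List α) (i j : ℕ) (hi : i < l.length) (hj : j < l.length)
    (h : l[i]? = l[j]?) : l[i]'hi = l[j]'hj := by
  rw [List.getElem?_eq_getElem hi, List.getElem?_eq_getElem hj] at h
  exact Option.some.inj h

theorem sf3 {x y z : F3} (hxy : x ≠ y) (hyz : y ≠ z) : SquareFree [x, y, z] := by
  rintro X hX ⟨s, t, hst⟩
  have hlen : s.length + (X.length + (X.length + t.length)) = 3 := by
    have := congrArg List.length hst; simpa using this
  have hXpos : 0 < X.length := List.length_pos_iff.mpr hX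
  have hX1 : X.length = 1 := by omega
  obtain ⟨d, rfl⟩ := List.length_eq_one_iff.mp hX1
  match s, hst with
  | [], hst =>
    simp only [List.nil_append, List.append_assoc, List.singleton_append, List.cons_append,
      List.cons.injEq] at hst
    exact hxy (hst.1.symm.trans hst.2.1)
  | [a], hst =>
    simp only [List.append_assoc, List.singleton_append, List.cons_append, List.nil_append,
      List.cons.injEq] at hst
    exact hyz (hst.2.1.symm.trans hst.2.2.1)
  | a :: b :: s, hst =>
    have := congrArg List.length hst
    simp at this; omega

section Morph

theorem flat_len (h : F3 → List F3) (hlen : ∀ x, (h x).length = 18) (w : List F3) :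
    (w.flatMap h).length = 18 * w.length := by
  induction w with
  | nil => simp
  | cons x w ih => simp [List.flatMap_cons, hlen, ih]; ring

theorem flat_drop (h : F3 → List F3) (hlen : ∀ x, (h x).length = 18) (j : ℕ) (w : List F3) :
    (w.flatMap h).drop (18 * j) = (w.drop j).flatMap h := by
  induction j generalizing w with
  | zero => simp
  | succ j ih =>
    cases w with
    | nil => simp
    | cons x w =>
      rw [List.flatMap_cons, show 18 * (j + 1) = (h x).length + 18 * j by rw [hlen]; ring,
        List.drop_length_add_append, ih, List.drop_succ_cons]

theorem flat_take (h : F3 → List F3) (hlen : ∀ x, (h x).length = 18) (j : ℕ) (w : List F3) :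
    (w.flatMap h).take (18 * j) = (w.take j).flatMap h := by
  induction j generalizing w with
  | zero => simp
  | succ j ih =>
    cases w with
    | nil => simp
    | cons x w =>
      rw [List.flatMap_cons, show 18 * (j + 1) = (h x).length + 18 * j by rw [hlen]; ring,
        List.take_length_add_append, ih, List.take_succ_cons, List.flatMap_cons]

theorem flat_block (h : F3 → List F3) (hlen : ∀ x, (h x).length = 18) (w : List F3) (j : ℕ)
    (hj : j < w.length) :
    ((w.flatMap h).drop (18 * j)).take 18 = h (w[j]'hj) := by
  rw [flat_drop h hlen, List.drop_eq_getElem_cons hj, List.flatMap_cons]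
  exact List.take_left' (hlen _)

theorem flat_block2 (h : F3 → List F3) (hlen : ∀ x, (h x).length = 18) (w : List F3) (j : ℕ)
    (hj : j + 1 < w.length) :
    ((w.flatMap h).drop (18 * j)).take 36 = h (w[j]'(by omega)) ++ h (w[j+1]'hj) := by
  rw [flat_drop h hlen, List.drop_eq_getElem_cons (show j < w.length by omega), List.flatMap_cons,
    List.drop_eq_getElem_cons (show j + 1 < w.length from hj), List.flatMap_cons,
    ← List.append_assoc]
  exact List.take_left' (by rw [List.length_append, hlen, hlen])

theorem seg_per {H P X Q : List F3} (hH : H = P ++ (X ++ (X ++ Q))) (a l : ℕ)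
    (h1 : P.length ≤ a) (h2 : a + l ≤ P.length + X.length) :
    (H.drop a).take l = (H.drop (a + X.length)).take l := by
  have e1 : H.drop a = X.drop (a - P.length) ++ (X ++ Q) := by
    rw [hH, List.drop_append, List.drop_eq_nil_of_le h1, List.nil_append,
      List.drop_append_of_le_length (by omega)]
  have e2 : H.drop (a + X.length) = X.drop (a - P.length) ++ Q := by
    rw [hH, List.drop_append, List.drop_eq_nil_of_le (by omega), List.nil_append,
      List.drop_append,
      List.drop_eq_nil_of_le (by omega : X.length ≤ a + X.length - P.length), List.nil_append,
      show a + X.length - P.length - X.length = a - P.length by omega,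
      List.drop_append_of_le_length (by omega)]
  rw [e1, e2, List.take_append_of_le_length (by rw [List.length_drop]; omega),
    List.take_append_of_le_length (by rw [List.length_drop]; omega)]

theorem sync_at (h : F3 → List F3) (hlen : ∀ x, (h x).length = 18)
    (hsync : ∀ x y z : F3, ∀ t : ℕ, 0 < t → t < 18 → ((h x ++ h y).drop t).take 18 ≠ h z)
    (w : List F3) (s : ℕ) (z : F3) (hs : s + 18 ≤ 18 * w.length)
    (hnd : ¬ (18 ∣ s)) (he : ((w.flatMap h).drop s).take 18 = h z) : False := by
  have hst : s = 18 * (s / 18) + s % 18 := by omega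
  set j := s / 18 with hjdef
  set t := s % 18 with htdef
  have ht0 : 0 < t := by
    rcases Nat.eq_zero_or_pos t with h0 | h0
    · exact absurd ⟨j, by omega⟩ hnd
    · exact h0
  have ht18 : t < 18 := by omega
  have hj : j + 1 < w.length := by omega
  have e0 : (w.flatMap h).drop s = ((w.flatMap h).drop (18 * j)).drop t := by
    rw [List.drop_drop]; congr 1 <;> omega
  have e1 : (((w.flatMap h).drop (18 * j)).drop t).take 18
      = ((((w.flatMap h).drop (18 * j)).take 36).drop t).take 18 := by
    rw [List.drop_take, List.take_take]
    congr 1 <;> omega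
  rw [e0, e1, flat_block2 h hlen w j hj] at he
  exact hsync _ _ z t ht0 ht18 he

theorem morph_sf (h : F3 → List F3) (hlen : ∀ x, (h x).length = 18)
    (hinj : ∀ x y : F3, h x = h y → x = y)
    (hsync : ∀ x y z : F3, ∀ t : ℕ, 0 < t → t < 18 → ((h x ++ h y).drop t).take 18 ≠ h z)
    (hshort : ∀ w : List F3, w.length ≤ 3 → SquareFree w → SquareFree (w.flatMap h)) :
    ∀ w : List F3, SquareFree w → SquareFree (w.flatMap h) := by
  suffices key : ∀ N : ℕ, ∀ w : List F3, w.length ≤ N → SquareFree w →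
      SquareFree (w.flatMap h) by
    exact fun w hw => key w.length w le_rfl hw
  intro N
  induction N with
  | zero =>
    intro w hw _ X hX hinf
    have h2 := List.length_pos_iff.mpr hX
    have h3 : w = [] := by cases w <;> simp_all
    subst h3
    have h1 := hinf.length_le
    simp only [List.flatMap_nil, List.length_nil, List.length_append] at h1
    omega
  | succ N IH =>
    intro w hwlen hsf X hX hinf
    obtain ⟨P, Q, hst⟩ := hinf
    have hH : w.flatMap h = P ++ (X ++ (X ++ Q)) := by rw [← hst]; simp
    have hXpos : 0 < X.length := List.length_pos_iff.mpr hX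
    have hHlen : 18 * w.length = P.length + (X.length + X.length + Q.length) := by
      have := congrArg List.length hH
      rw [flat_len h hlen] at this
      simp only [List.length_append] at this
      omega
    by_cases hsmall : w.length ≤ 3
    · exact hshort w hsmall hsf X hX ⟨P, Q, hst⟩
    push_neg at hsmall
    by_cases hp18 : 18 ≤ P.length
    · -- drop the first letter
      obtain ⟨a, w', rfl⟩ : ∃ a w', w = a :: w' := by
        cases w with
        | nil => simp at hsmall
        | cons a w' => exact ⟨a, w', rfl⟩
      have htail : w'.flatMap h = P.drop 18 ++ (X ++ (X ++ Q)) := by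
        have e : w'.flatMap h = ((a :: w').flatMap h).drop 18 := by
          rw [List.flatMap_cons, List.drop_left' (hlen a)]
        rw [e, hH, List.drop_append, show 18 - P.length = 0 by omega,
          List.drop_zero]
      refine IH w' (by simp only [List.length_cons] at hwlen; omega)
        (sf_infix hsf ⟨[a], [], by simp⟩) X hX ⟨P.drop 18, Q, ?_⟩
      rw [htail]; simp
    by_cases hq18 : 18 ≤ Q.length
    · -- drop the last letter
      push_neg at hp18
      have htake : (w.take (w.length - 1)).flatMap h
          = P ++ (X ++ (X ++ Q.take (Q.length - 18))) := by
        rw [← flat_take h hlen, hH,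
          show 18 * (w.length - 1)
            = P.length + (X.length + (X.length + (Q.length - 18))) by omega,
          List.take_length_add_append, List.take_length_add_append, List.take_length_add_append]
      refine IH (w.take (w.length - 1)) (by rw [List.length_take]; omega)
        (sf_infix hsf ⟨[], w.drop (w.length - 1), by simp⟩) X hX
        ⟨P, Q.take (Q.length - 18), ?_⟩
      rw [htake]; simp
    -- main case
    push_neg at hp18 hq18
    have hn19 : 19 ≤ X.length := by omega
    have hper : ∀ a l : ℕ, P.length ≤ a → a + l ≤ P.length + X.length →
        ((w.flatMap h).drop a).take l = ((w.flatMap h).drop (a + X.length)).take l :=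
      fun a l h1 h2 => seg_per hH a l h1 h2
    have hdvd : 18 ∣ X.length := by
      by_contra hnd
      rcases le_or_gt 36 (P.length + X.length) with hk | hk
      · have e2 := hper 18 18 (by omega) (by omega)
        have e1 : ((w.flatMap h).drop 18).take 18 = h (w[1]'(by omega)) := by
          have := flat_block h hlen w 1 (by omega)
          norm_num at this
          exact this
        exact sync_at h hlen hsync w (18 + X.length) _ (by omega) (by omega)
          (e2.symm.trans e1)
      · have hn35 : X.length ≤ 35 := by omega
        have e2 := hper (36 - X.length) 18 (by omega) (by omega)
        have e1 : ((w.flatMap h).drop 36).take 18 = h (w[2]'(by omega)) := by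
          have := flat_block h hlen w 2 (by omega)
          norm_num at this
          exact this
        rw [show 36 - X.length + X.length = 36 by omega] at e2
        exact sync_at h hlen hsync w (36 - X.length) _ (by omega) (by omega)
          (e2.trans e1)
    obtain ⟨m, hnm⟩ := hdvd
    have hm2 : 2 ≤ m := by omega
    rcases Nat.eq_zero_or_pos P.length with hp0 | hppos
    · -- aligned case : w would contain a square u ++ u
      have hN2 : w.length = 2 * m := by omega
      have heq : ∀ j, j < m → w[m + j]? = w[j]? := by
        intro j hj
        have e := hper (18 * j) 18 (by omega) (by omega)
        rw [show 18 * j + X.length = 18 * (m + j) by omega] at e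
        rw [flat_block h hlen w j (by omega), flat_block h hlen w (m + j) (by omega)] at e
        have e' := hinj _ _ e
        rw [List.getElem?_eq_getElem (show m + j < w.length by omega),
          List.getElem?_eq_getElem (show j < w.length by omega)]
        exact congrArg some e'.symm
      have hdt : w.drop m = w.take m := by
        apply List.ext_getElem
        · rw [List.length_drop, List.length_take]; omega
        · intro i h1 h2
          rw [List.length_drop] at h1
          rw [List.getElem_drop, List.getElem_take]
          exact gE w (m + i) i (by omega) (by omega) (heq i (by omega))
      refine hsf (w.take m) ?_ ⟨[], [], ?_⟩
      · have hl : (w.take m).length = m := by rw [List.length_take]; omega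
        intro hc; rw [hc] at hl; simp at hl; omega
      · have e := List.take_append_drop m w
        rw [hdt] at e
        simpa using e
    · -- misaligned case
      have hN2 : w.length = 2 * m + 1 := by omega
      have h0N : 0 < w.length := by omega
      have hmN : m < w.length := by omega
      have h2mN : 2 * m < w.length := by omega
      have hi : ∀ j, 1 ≤ j → j < m → w[j]? = w[j + m]? := by
        intro j hj1 hjm
        have e := hper (18 * j) 18 (by omega) (by omega)
        rw [show 18 * j + X.length = 18 * (j + m) by omega] at e
        rw [flat_block h hlen w j (by omega), flat_block h hlen w (j + m) (by omega)] at e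
        have e' := hinj _ _ e
        rw [List.getElem?_eq_getElem (show j < w.length by omega),
          List.getElem?_eq_getElem (show j + m < w.length by omega)]
        exact congrArg some e'
      have hii : (h (w[0]'h0N)).drop P.length = (h (w[m]'hmN)).drop P.length := by
        have q1 : ((w.flatMap h).drop P.length).take (18 - P.length)
            = (h (w[0]'h0N)).drop P.length := by
          rw [← List.drop_take]
          have b0 := flat_block h hlen w 0 h0N
          norm_num at b0
          rw [b0]
        have q2 : ((w.flatMap h).drop (P.length + X.length)).take (18 - P.length)
            = (h (w[m]'hmN)).drop P.length := by
          have e : (w.flatMap h).drop (P.length + X.length)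
              = ((w.flatMap h).drop (18 * m)).drop P.length := by
            rw [List.drop_drop]; congr 1 <;> omega
          rw [e, ← List.drop_take, flat_block h hlen w m hmN]
        have e := hper P.length (18 - P.length) le_rfl (by omega)
        rw [q1, q2] at e
        exact e
      have hiii : (h (w[m]'hmN)).take P.length = (h (w[2*m]'h2mN)).take P.length := by
        have q3 : ((w.flatMap h).drop (18 * m)).take P.length
            = (h (w[m]'hmN)).take P.length := by
          rw [← flat_block h hlen w m hmN, List.take_take]
          congr 1
          omega
        have q4 : ((w.flatMap h).drop (18 * (2 * m))).take P.length
            = (h (w[2*m]'h2mN)).take P.length := by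
          rw [← flat_block h hlen w (2*m) h2mN, List.take_take]
          congr 1
          omega
        have e := hper (18 * m) P.length (by omega) (by omega)
        rw [show 18 * m + X.length = 18 * (2 * m) by omega] at e
        rw [q3, q4] at e
        exact e
      have hxy : w[0]'h0N ≠ w[m]'hmN := by
        intro hexy
        have huv : (w.drop m).take m = w.take m := by
          apply List.ext_getElem
          · rw [List.length_take, List.length_drop, List.length_take]; omega
          · intro i h1 h2
            rw [List.length_take, List.length_drop] at h1
            rw [List.getElem_take, List.getElem_drop, List.getElem_take]
            refine gE w (m + i) i (by omega) (by omega) ?_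
            rcases Nat.eq_zero_or_pos i with rfl | hip
            · rw [Nat.add_zero, List.getElem?_eq_getElem hmN, List.getElem?_eq_getElem h0N]
              exact congrArg some hexy.symm
            · rw [Nat.add_comm m i]
              exact (hi i hip (by omega)).symm
        refine hsf (w.take m) ?_ ⟨[], w.drop (2 * m), ?_⟩
        · have hl : (w.take m).length = m := by rw [List.length_take]; omega
          intro hc; rw [hc] at hl; simp at hl; omega
        · have e : w.take (2 * m) = w.take m ++ (w.drop m).take m := by
            rw [show 2 * m = m + m by ring, List.take_add]
          rw [huv] at e
          have e2 := List.take_append_drop (2 * m) w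
          rw [e] at e2
          simpa using e2
      have hyz : w[m]'hmN ≠ w[2*m]'h2mN := by
        intro heyz
        have huv : ((w.drop 1).drop m).take m = (w.drop 1).take m := by
          apply List.ext_getElem
          · simp only [List.length_take, List.length_drop]; omega
          · intro i h1 h2
            rw [List.length_take, List.length_drop, List.length_drop] at h1
            rw [List.getElem_take, List.getElem_drop, List.getElem_drop,
              List.getElem_take, List.getElem_drop]
            refine gE w (1 + (m + i)) (1 + i) (by omega) (by omega) ?_
            rcases eq_or_lt_of_le (show i + 1 ≤ m by omega) with he | hlt
            · rw [show 1 + (m + i) = 2 * m by omega, show 1 + i = m by omega,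
                List.getElem?_eq_getElem h2mN, List.getElem?_eq_getElem hmN]
              exact congrArg some heyz.symm
            · rw [show 1 + (m + i) = (i + 1) + m by omega, show 1 + i = i + 1 by omega]
              exact (hi (i + 1) (by omega) (by omega)).symm
        refine hsf ((w.drop 1).take m) ?_ ⟨w.take 1, w.drop (2 * m + 1), ?_⟩
        · have hl : ((w.drop 1).take m).length = m := by
            rw [List.length_take, List.length_drop]; omega
          intro hc; rw [hc] at hl; simp at hl; omega
        · have e : (w.drop 1).take (2 * m) = (w.drop 1).take m ++ ((w.drop 1).drop m).take m := by
            rw [show 2 * m = m + m by ring, List.take_add]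
          rw [huv] at e
          have e2 : w.drop 1 = (w.drop 1).take (2 * m) ++ w.drop (2 * m + 1) := by
            conv_lhs => rw [← List.take_append_drop (2 * m) (w.drop 1)]
            rw [List.drop_drop, Nat.add_comm 1 (2 * m)]
          have e3 := List.take_append_drop 1 w
          rw [e2, e] at e3
          simp only [List.append_assoc] at e3 ⊢
          exact e3
      -- the final square inside h x ++ h y ++ h z
      have hsf3 : SquareFree [w[0]'h0N, w[m]'hmN, w[2*m]'h2mN] := sf3 hxy hyz
      have himg := hshort _ (by simp) hsf3
      have hy' : h (w[m]'hmN)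
          = (h (w[2*m]'h2mN)).take P.length ++ (h (w[0]'h0N)).drop P.length := by
        conv_lhs => rw [← List.take_append_drop P.length (h (w[m]'hmN))]
        rw [hiii, ← hii]
      refine himg ((h (w[0]'h0N)).drop P.length ++ (h (w[2*m]'h2mN)).take P.length)
        ?_ ⟨(h (w[0]'h0N)).take P.length, (h (w[2*m]'h2mN)).drop P.length, ?_⟩
      · intro hc
        have := congrArg List.length hc
        simp only [List.length_append, List.length_drop, List.length_take, hlen,
          List.length_nil] at this
        omega
      · simp only [List.flatMap_cons, List.flatMap_nil, List.append_nil]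
        conv_rhs => rw [← List.take_append_drop P.length (h (w[0]'h0N)),
          ← List.take_append_drop P.length (h (w[m]'hmN)),
          ← List.take_append_drop P.length (h (w[2*m]'h2mN))]
        rw [hiii, ← hii]
        simp only [List.append_assoc]

end Morph

theorem reach_D_A : Reaches Dw A := by
  have s1 : Step ([0,1,0,2,0,1,2,1,0,1,2,1,0,1,0,2,0,1,0,2,0,2,1,2,0,2,1,0,1,2,1,0,1,0,1,2] : List F3) [0,1,0,2,0,1,2,1,0,1,0,2,0,1,0,2,0,2,1,2,0,2,1,0,1,2,1,0,1,0,1,2] :=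
    ⟨[0,1,0,2], [0,1,2,1], [0,1,0,2,0,1,0,2,0,2,1,2,0,2,1,0,1,2,1,0,1,0,1,2], by decide, by decide, by decide⟩
  have s2 : Step ([0,1,0,2,0,1,2,1,0,1,0,2,0,1,0,2,0,2,1,2,0,2,1,0,1,2,1,0,1,0,1,2] : List F3) [0,1,0,2,0,1,2,1,0,2,0,1,0,2,0,2,1,2,0,2,1,0,1,2,1,0,1,0,1,2] :=
    ⟨[0,1,0,2,0,1,2], [1,0], [2,0,1,0,2,0,2,1,2,0,2,1,0,1,2,1,0,1,0,1,2], by decide, by decide, by decide⟩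
  have s3 : Step ([0,1,0,2,0,1,2,1,0,2,0,1,0,2,0,2,1,2,0,2,1,0,1,2,1,0,1,0,1,2] : List F3) [0,1,0,2,0,1,2,1,0,2,0,1,0,2,0,2,1,0,1,2,1,0,1,0,1,2] :=
    ⟨[0,1,0,2,0,1,2,1,0,2,0,1,0], [2,0,2,1], [0,1,2,1,0,1,0,1,2], by decide, by decide, by decide⟩
  have s4 : Step ([0,1,0,2,0,1,2,1,0,2,0,1,0,2,0,2,1,0,1,2,1,0,1,0,1,2] : List F3) [0,1,0,2,0,1,2,1,0,2,0,1,0,2,1,0,1,2,1,0,1,0,1,2] :=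
    ⟨[0,1,0,2,0,1,2,1,0,2,0,1], [0,2], [1,0,1,2,1,0,1,0,1,2], by decide, by decide, by decide⟩
  have s5 : Step ([0,1,0,2,0,1,2,1,0,2,0,1,0,2,1,0,1,2,1,0,1,0,1,2] : List F3) [0,1,0,2,0,1,2,1,0,2,0,1,0,2,1,0,1,0,1,2] :=
    ⟨[0,1,0,2,0,1,2,1,0,2,0,1,0], [2,1,0,1], [0,1,2], by decide, by decide, by decide⟩
  have s6 : Step ([0,1,0,2,0,1,2,1,0,2,0,1,0,2,1,0,1,0,1,2] : List F3) [0,1,0,2,0,1,2,1,0,2,0,1,0,2,1,0,1,2] :=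
    ⟨[0,1,0,2,0,1,2,1,0,2,0,1,0,2], [1,0], [1,2], by decide, by decide, by decide⟩
  exact (Relation.ReflTransGen.head s1 (Relation.ReflTransGen.head s2 (Relation.ReflTransGen.head s3 (Relation.ReflTransGen.head s4 (Relation.ReflTransGen.head s5 (Relation.ReflTransGen.head s6 Relation.ReflTransGen.refl))))))

theorem reach_D_B : Reaches Dw B := by
  have s1 : Step ([0,1,0,2,0,1,2,1,0,1,2,1,0,1,0,2,0,1,0,2,0,2,1,2,0,2,1,0,1,2,1,0,1,0,1,2] : List F3) [0,1,0,2,0,1,2,1,0,1,0,2,0,1,0,2,0,2,1,2,0,2,1,0,1,2,1,0,1,0,1,2] :=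
    ⟨[0,1,0,2], [0,1,2,1], [0,1,0,2,0,1,0,2,0,2,1,2,0,2,1,0,1,2,1,0,1,0,1,2], by decide, by decide, by decide⟩
  have s2 : Step ([0,1,0,2,0,1,2,1,0,1,0,2,0,1,0,2,0,2,1,2,0,2,1,0,1,2,1,0,1,0,1,2] : List F3) [0,1,0,2,0,1,2,1,0,2,0,1,0,2,0,2,1,2,0,2,1,0,1,2,1,0,1,0,1,2] :=
    ⟨[0,1,0,2,0,1,2], [1,0], [2,0,1,0,2,0,2,1,2,0,2,1,0,1,2,1,0,1,0,1,2], by decide, by decide, by decide⟩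
  have s3 : Step ([0,1,0,2,0,1,2,1,0,2,0,1,0,2,0,2,1,2,0,2,1,0,1,2,1,0,1,0,1,2] : List F3) [0,1,0,2,0,1,2,1,0,2,0,2,1,2,0,2,1,0,1,2,1,0,1,0,1,2] :=
    ⟨[0,1,0,2,0,1,2], [1,0,2,0], [2,1,2,0,2,1,0,1,2,1,0,1,0,1,2], by decide, by decide, by decide⟩
  have s4 : Step ([0,1,0,2,0,1,2,1,0,2,0,2,1,2,0,2,1,0,1,2,1,0,1,0,1,2] : List F3) [0,1,0,2,0,1,2,1,0,2,1,2,0,2,1,0,1,2,1,0,1,0,1,2] :=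
    ⟨[0,1,0,2,0,1,2,1], [0,2], [1,2,0,2,1,0,1,2,1,0,1,0,1,2], by decide, by decide, by decide⟩
  have s5 : Step ([0,1,0,2,0,1,2,1,0,2,1,2,0,2,1,0,1,2,1,0,1,0,1,2] : List F3) [0,1,0,2,0,1,2,1,0,2,1,2,0,2,1,0,1,0,1,2] :=
    ⟨[0,1,0,2,0,1,2,1,0,2,1,2,0], [2,1,0,1], [0,1,2], by decide, by decide, by decide⟩
  have s6 : Step ([0,1,0,2,0,1,2,1,0,2,1,2,0,2,1,0,1,0,1,2] : List F3) [0,1,0,2,0,1,2,1,0,2,1,2,0,2,1,0,1,2] :=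
    ⟨[0,1,0,2,0,1,2,1,0,2,1,2,0,2], [1,0], [1,2], by decide, by decide, by decide⟩
  exact (Relation.ReflTransGen.head s1 (Relation.ReflTransGen.head s2 (Relation.ReflTransGen.head s3 (Relation.ReflTransGen.head s4 (Relation.ReflTransGen.head s5 (Relation.ReflTransGen.head s6 Relation.ReflTransGen.refl))))))

-- congruence of Reaches
theorem step_left {α : Type*} (L : List α) {W W' : List α} (h : Step W W') :
    Step (L ++ W) (L ++ W') := by
  obtain ⟨U, X, V, hX, h1, h2⟩ := h
  exact ⟨L ++ U, X, V, hX, by rw [h1]; simp, by rw [h2]; simp⟩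

theorem step_right {α : Type*} (R : List α) {W W' : List α} (h : Step W W') :
    Step (W ++ R) (W' ++ R) := by
  obtain ⟨U, X, V, hX, h1, h2⟩ := h
  exact ⟨U, X, V ++ R, hX, by rw [h1]; simp, by rw [h2]; simp⟩

theorem reach_left {α : Type*} (L : List α) {W W' : List α} (h : Reaches W W') :
    Reaches (L ++ W) (L ++ W') :=
  Relation.ReflTransGen.lift (r := Step) (fun w => L ++ w) (fun _ _ hs => step_left L hs) _ _ h

theorem reach_right {α : Type*} (R : List α) {W W' : List α} (h : Reaches W W') :
    Reaches (W ++ R) (W' ++ R) :=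
  Relation.ReflTransGen.lift (r := Step) (fun w => w ++ R) (fun _ _ hs => step_right R hs) _ _ h

theorem step_flatMap (f : F3 → List F3) (hne : ∀ x, f x ≠ []) {S S' : List F3}
    (h : Step S S') : Step (S.flatMap f) (S'.flatMap f) := by
  obtain ⟨U, X, V, hX, h1, h2⟩ := h
  refine ⟨U.flatMap f, X.flatMap f, V.flatMap f, ?_, ?_, ?_⟩
  · cases X with
    | nil => exact absurd rfl hX
    | cons x t =>
      rw [List.flatMap_cons]
      intro hc
      rcases List.append_eq_nil_iff.mp hc with ⟨hc1, _⟩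
      exact hne x hc1
  · rw [h1]; simp [List.flatMap_append]
  · rw [h2]; simp [List.flatMap_append]

theorem reach_flatMap (f : F3 → List F3) (hne : ∀ x, f x ≠ []) {S S' : List F3}
    (h : Reaches S S') : Reaches (S.flatMap f) (S'.flatMap f) :=
  Relation.ReflTransGen.lift (r := Step) (fun w : List F3 => w.flatMap f)
    (fun _ _ hs => step_flatMap f hne hs) _ _ h

theorem reach_letterwise (f g : F3 → List F3) (hfg : ∀ x, Reaches (f x) (g x)) :
    ∀ R : List F3, Reaches (R.flatMap f) (R.flatMap g) := by
  intro R
  induction R with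
  | nil => exact Relation.ReflTransGen.refl
  | cons x R ih =>
    rw [List.flatMap_cons, List.flatMap_cons]
    exact Relation.ReflTransGen.trans (reach_right (R.flatMap f) (hfg x))
      (reach_left (g x) ih)

theorem step_head {α : Type*} {W W' : List α} (h : Step W W') : W.head? = W'.head? := by
  obtain ⟨U, X, V, hX, h1, h2⟩ := h
  subst h1; subst h2
  cases U with
  | nil =>
    cases X with
    | nil => exact absurd rfl hX
    | cons x t => simp
  | cons u U => simp

theorem reach_head {α : Type*} {W W' : List α} (h : Reaches W W') : W.head? = W'.head? := by
  induction h with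
  | refl => rfl
  | tail _ h2 ih => exact ih.trans (step_head h2)

theorem step_len {α : Type*} {W W' : List α} (h : Step W W') : W'.length ≤ W.length := by
  obtain ⟨U, X, V, hX, h1, h2⟩ := h
  subst h1; subst h2
  simp only [List.length_append]
  omega

theorem reach_len {α : Type*} {W W' : List α} (h : Reaches W W') : W'.length ≤ W.length := by
  induction h with
  | refl => exact le_refl _
  | tail _ h2 ih => exact le_trans (step_len h2) ih



def allLE (n : ℕ) : List (List F3) := (List.range (n+1)).flatMap allE

theorem mem_allLE (w : List F3) (n : ℕ) (h : w.length ≤ n) : w ∈ allLE n := by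
  rw [allLE, List.mem_flatMap]
  exact ⟨w.length, List.mem_range.mpr (by omega), mem_allE w⟩

theorem reducts_finite (W : List F3) : (Reducts W).Finite := by
  apply Set.Finite.subset (List.finite_toSet (allLE W.length))
  rintro R ⟨h1, _⟩
  exact mem_allLE R _ (reach_len h1)

theorem flat_inj (h : F3 → List F3) (hlen : ∀ x, (h x).length = 18)
    (hinj : ∀ x y : F3, h x = h y → x = y) :
    Function.Injective (fun R : List F3 => R.flatMap h) := by
  intro R R' e
  simp only at e
  induction R generalizing R' with
  | nil =>
    cases R' with
    | nil => rfl
    | cons b R' =>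
      exfalso
      have := congrArg List.length e
      rw [flat_len h hlen, flat_len h hlen] at this
      simp at this
  | cons a R ih =>
    cases R' with
    | nil =>
      exfalso
      have := congrArg List.length e
      rw [flat_len h hlen, flat_len h hlen] at this
      simp at this
    | cons b R' =>
      rw [List.flatMap_cons, List.flatMap_cons] at e
      have e1 : h a = h b := by
        have := congrArg (List.take 18) e
        rwa [List.take_left' (hlen a), List.take_left' (hlen b)] at this
      have e2 : R.flatMap h = R'.flatMap h := by
        have := congrArg (List.drop 18) e
        rwa [List.drop_left' (hlen a), List.drop_left' (hlen b)] at this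
      rw [hinj a b e1, ih e2]

def σ : F3 → F3 := ![1, 0, 2]

theorem sf_map_σ {W : List F3} (h : SquareFree W) : SquareFree (W.map σ) := by
  rintro X hX ⟨s, t, hst⟩
  apply h (X.map σ) (by simpa using hX)
  refine ⟨s.map σ, t.map σ, ?_⟩
  have e := congrArg (List.map σ) hst
  simp only [List.map_append, List.map_map] at e
  have hcomp : σ ∘ σ = id := by funext a; revert a; decide
  rw [hcomp, List.map_id] at e
  exact e

theorem μ_len : ∀ x, (μ x).length = 18 := by decide
theorem ν_len : ∀ x, (ν x).length = 18 := by decide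
theorem μ_inj : ∀ x y : F3, μ x = μ y → x = y := by decide
theorem ν_inj : ∀ x y : F3, ν x = ν y → x = y := by decide
theorem μ_mem : ∀ x, μ x ∈ [A, B, Cw] := by decide
theorem ν_mem : ∀ x, ν x ∈ [A, B, Cw] := by decide
theorem ψ'_ne : ∀ x, ψ' x ≠ [] := by decide

theorem hsync_of_mem (h : F3 → List F3) (hmem : ∀ x, h x ∈ [A, B, Cw]) :
    ∀ x y z : F3, ∀ t : ℕ, 0 < t → t < 18 → ((h x ++ h y).drop t).take 18 ≠ h z := by
  intro x y z t h0 h18 he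
  rcases sync_check (h x) (hmem x) (h y) (hmem y) (h z) (hmem z) t (by omega) he with h' | h'
  · omega
  · omega

theorem μ_short : ∀ w : List F3, w.length ≤ 3 → SquareFree w → SquareFree (w.flatMap μ) := by
  intro w hw hsf
  exact (chkN_iff _).mp
    (short_check_mu w.length (by omega) w (mem_allE w) ((chkN_iff w).mpr hsf))

theorem flat_ν_eq (R : List F3) : R.flatMap ν = (R.map σ).flatMap μ := by
  have e : ν = (fun a => μ (σ a)) := by funext a; revert a; decide
  calc R.flatMap ν = R.flatMap (fun a => μ (σ a)) := by rw [e]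
    _ = (R.map σ).flatMap μ := (List.flatMap_map σ μ R).symm

theorem ν_short : ∀ w : List F3, w.length ≤ 3 → SquareFree w → SquareFree (w.flatMap ν) := by
  intro w hw hsf
  rw [flat_ν_eq]
  exact μ_short (w.map σ) (by simpa using hw) (sf_map_σ hsf)

theorem μ_sf : ∀ w : List F3, SquareFree w → SquareFree (w.flatMap μ) :=
  morph_sf μ μ_len μ_inj (hsync_of_mem μ μ_mem) μ_short

theorem ν_sf : ∀ w : List F3, SquareFree w → SquareFree (w.flatMap ν) :=
  morph_sf ν ν_len ν_inj (hsync_of_mem ν ν_mem) ν_short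

theorem ψμ : ∀ x, Reaches (ψ' x) (μ x) := by
  intro x
  fin_cases x
  · exact reach_D_A
  · exact reach_D_B
  · exact Relation.ReflTransGen.refl

theorem ψν : ∀ x, Reaches (ψ' x) (ν x) := by
  intro x
  fin_cases x
  · exact reach_D_B
  · exact reach_D_A
  · exact Relation.ReflTransGen.refl

theorem master (S : List F3) (hS : S.head? = some 0) :
    2 * (Reducts S).ncard ≤ (Reducts (S.flatMap ψ')).ncard := by
  classical
  have hTfin : (Reducts S).Finite := reducts_finite S
  have hKfin : (Reducts (S.flatMap ψ')).Finite := reducts_finite _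
  have hμs : (fun R : List F3 => R.flatMap μ) '' (Reducts S) ⊆ Reducts (S.flatMap ψ') := by
    rintro _ ⟨R, ⟨hR1, hR2⟩, rfl⟩
    exact ⟨Relation.ReflTransGen.trans (reach_flatMap ψ' ψ'_ne hR1)
      (reach_letterwise ψ' μ ψμ R), μ_sf R hR2⟩
  have hνs : (fun R : List F3 => R.flatMap ν) '' (Reducts S) ⊆ Reducts (S.flatMap ψ') := by
    rintro _ ⟨R, ⟨hR1, hR2⟩, rfl⟩
    exact ⟨Relation.ReflTransGen.trans (reach_flatMap ψ' ψ'_ne hR1)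
      (reach_letterwise ψ' ν ψν R), ν_sf R hR2⟩
  have hhead : ∀ R ∈ Reducts S, ∃ t : List F3, R = 0 :: t := by
    rintro R ⟨hR1, _⟩
    have h0 : R.head? = some 0 := by rw [← reach_head hR1]; exact hS
    cases R with
    | nil => simp at h0
    | cons a t =>
      simp only [List.head?_cons, Option.some.injEq] at h0
      exact ⟨t, by rw [h0]⟩
  have hdisj : Disjoint ((fun R : List F3 => R.flatMap μ) '' (Reducts S))
      ((fun R : List F3 => R.flatMap ν) '' (Reducts S)) := by
    rw [Set.disjoint_left]
    rintro _ ⟨R, hR, rfl⟩ ⟨R', hR', heq⟩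
    obtain ⟨t, rfl⟩ := hhead R hR
    obtain ⟨t', rfl⟩ := hhead R' hR'
    have e1 := congrArg (List.take 18) heq
    simp only at e1
    rw [List.flatMap_cons, List.flatMap_cons, show ν 0 = B from rfl, show μ 0 = A from rfl,
      List.take_left' (by decide : (B : List F3).length = 18),
      List.take_left' (by decide : (A : List F3).length = 18)] at e1
    exact absurd e1 (by decide)
  have h1 : ((fun R : List F3 => R.flatMap μ) '' (Reducts S)
      ∪ (fun R : List F3 => R.flatMap ν) '' (Reducts S)).ncard
      ≤ (Reducts (S.flatMap ψ')).ncard :=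
    Set.ncard_le_ncard (Set.union_subset hμs hνs) hKfin
  have h2 := Set.ncard_union_eq hdisj (hTfin.image _) (hTfin.image _)
  have h3 := Set.ncard_image_of_injective (Reducts S) (flat_inj μ μ_len μ_inj)
  have h4 := Set.ncard_image_of_injective (Reducts S) (flat_inj ν ν_len ν_inj)
  omega

end PsiProof

/-- With `C = abacbcacbacabcbabc`, `D = abacabcbabcbabacabacacbcacbabcbababc` and
`ψ : a ↦ D, b ↦ D, c ↦ C` (letters of `Fin 3`: `a = 0`, `b = 1`, `c = 2`),
every word `S` starting with `a` satisfies `r(ψ(S)) ≥ 2 · r(S)`. -/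
theorem psi_doubles_reducts
    (C D : List (Fin 3))
    (hC : C = [0,1,0,2,1,2,0,2,1,0,2,0,1,2,1,0,1,2])
    (hD : D = [0,1,0,2,0,1,2,1,0,1,2,1,0,1,0,2,0,1,0,2,0,2,1,2,0,2,1,0,1,2,1,0,1,0,1,2])
    (ψ : Fin 3 → List (Fin 3)) (hψ : ψ = ![D, D, C])
    (S : List (Fin 3)) (hS : S.head? = some 0) :
    2 * (Reducts S).ncard ≤ (Reducts (S.flatMap ψ)).ncard := by
  subst hC; subst hD; subst hψ
  exact PsiProof.master S hS
end

section
/- The word F = xabaxababx over the alphabet {a,b,x,y} has exactly two distinct square-free reducts, namely P = xabx and Q = xabaxabx. -/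
/-- Enumeration of all results of a single square reduction. -/
def succs {α : Type*} [DecidableEq α] (W : List α) : List (List α) :=
  (List.range (W.length + 1)).flatMap fun i =>
    (List.range (W.length + 1)).filterMap fun l =>
      if l ≠ 0 ∧ (W.drop i).take l = (W.drop (i + l)).take l ∧ i + 2 * l ≤ W.length
      then some (W.take i ++ (W.drop i).take l ++ W.drop (i + 2 * l))
      else none

lemma step_mem_succs {α : Type*} [DecidableEq α] {W W' : List α}
    (h : Step W W') : W' ∈ succs W := by
  obtain ⟨U, X, V, hX, hW, hW'⟩ := h
  subst hW hW'
  set i := U.length with hi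
  set l := X.length with hl
  have hlen : (U ++ (X ++ X) ++ V).length = i + 2 * l + V.length := by
    simp [List.length_append]; ring
  have htake : (U ++ (X ++ X) ++ V).take i = U := by
    rw [List.append_assoc, List.take_left]
  have hdropi : (U ++ (X ++ X) ++ V).drop i = X ++ X ++ V := by
    rw [List.append_assoc, List.drop_left]
  have hdt : ((U ++ (X ++ X) ++ V).drop i).take l = X := by
    rw [hdropi, List.append_assoc, List.take_left]
  have hdil : (U ++ (X ++ X) ++ V).drop (i + l) = X ++ V := by
    rw [← List.drop_drop, hdropi, List.append_assoc, List.drop_left]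
  have hdt2 : ((U ++ (X ++ X) ++ V).drop (i + l)).take l = X := by
    rw [hdil, List.take_left]
  have hdrop2 : (U ++ (X ++ X) ++ V).drop (i + 2 * l) = V := by
    have : i + 2 * l = i + l + l := by ring
    rw [this, ← List.drop_drop, hdil, List.drop_left]
  simp only [succs, List.mem_flatMap, List.mem_filterMap, List.mem_range]
  refine ⟨i, ?_, l, ?_, ?_⟩
  · omega
  · omega
  rw [if_pos]
  · rw [htake, hdt, hdrop2]
  · refine ⟨by simp only [hl, ne_eq, List.length_eq_zero_iff]; exact hX, by rw [hdt, hdt2], by omega⟩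

lemma squareFree_of_aux {α : Type*} [DecidableEq α] (W : List α)
    (h : ∀ X ∈ W.sublists, X ≠ [] → ¬ (X ++ X) <:+: W) : SquareFree W := by
  intro X hX hinf
  refine h X ?_ hX hinf
  rw [List.mem_sublists]
  exact ((List.prefix_append X X).isInfix.trans hinf).sublist

lemma not_squareFree {α : Type*} (W X : List α) (hX : X ≠ []) (h : (X ++ X) <:+: W) :
    ¬ SquareFree W := fun hsf => hsf X hX h

set_option maxRecDepth 100000 in
/-- The word `F = xabaxababx` over `{a, b, x, y}` (encoded in `Fin 4` as
`a = 0`, `b = 1`, `x = 2`, `y = 3`) has exactly two square-free reducts,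
namely `P = xabx` and `Q = xabaxabx`. -/
theorem F_two_reducts :
    Reducts ([2,0,1,0,2,0,1,0,1,2] : List (Fin 4)) =
      {[2,0,1,2], [2,0,1,0,2,0,1,2]} ∧
    ([2,0,1,2] : List (Fin 4)) ≠ [2,0,1,0,2,0,1,2] := by
  set F : List (Fin 4) := [2,0,1,0,2,0,1,0,1,2] with hF
  set Q : List (Fin 4) := [2,0,1,0,2,0,1,2] with hQ
  set M : List (Fin 4) := [2,0,1,0,1,2] with hM
  set P : List (Fin 4) := [2,0,1,2] with hP
  have hSFP : SquareFree P := by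
    apply squareFree_of_aux; decide
  have hSFQ : SquareFree Q := by
    apply squareFree_of_aux; decide
  have hclosed : ∀ W ∈ [F, Q, M, P], ∀ W' ∈ succs W, W' ∈ [F, Q, M, P] := by
    decide
  have hreach : ∀ R : List (Fin 4), Reaches F R → R ∈ [F, Q, M, P] := by
    intro R h
    induction h with
    | refl => simp
    | tail _ hstep ih =>
      exact hclosed _ ih _ (step_mem_succs hstep)
  constructor
  · ext R
    simp only [Reducts, Set.mem_setOf_eq, Set.mem_insert_iff, Set.mem_singleton_iff]
    constructor
    · rintro ⟨hr, hsf⟩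
      have := hreach R hr
      simp only [List.mem_cons, List.not_mem_nil, or_false] at this
      rcases this with rfl | rfl | rfl | rfl
      · exact absurd hsf (not_squareFree F [0,1] (by decide) (by decide))
      · right; rfl
      · exact absurd hsf (not_squareFree M [0,1] (by decide) (by decide))
      · left; rfl
    · rintro (rfl | rfl)
      · refine ⟨?_, hSFP⟩
        have s1 : Step F M := ⟨[], [2,0,1,0], [1,2], by decide, rfl, rfl⟩
        have s2 : Step M P := ⟨[2], [0,1], [2], by decide, rfl, rfl⟩
        exact Relation.ReflTransGen.head s1 (Relation.ReflTransGen.single s2)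
      · refine ⟨?_, hSFQ⟩
        have s1 : Step F Q := ⟨[2,0,1,0,2], [0,1], [2], by decide, rfl, rfl⟩
        exact Relation.ReflTransGen.single s1
  · decide
end

section
/- Let W = a_1 a_2 ⋯ a_n be a square-free word, where each a_i is a single letter, and let V = a_1^{k_1} a_2^{k_2} ⋯ a_n^{k_n}, where each k_i is a positive integer. Then every square occurring as a factor of V has the form x^{2k} for some positive integer k and some single letter x equal to one of the a_i. -/
section Dst
variable {α : Type*} [DecidableEq α]

/-- Remove consecutive duplicate letters. -/
def dst : List α → List α
  | [] => []
  | [a] => [a]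
  | a :: b :: l => if a = b then dst (b :: l) else a :: dst (b :: l)

lemma dst_cons_cons_eq {a b : α} (l : List α) (h : a = b) :
    dst (a :: b :: l) = dst (b :: l) := by simp [dst, h]

lemma dst_cons_cons_ne {a b : α} (l : List α) (h : a ≠ b) :
    dst (a :: b :: l) = a :: dst (b :: l) := by simp [dst, h]

lemma dst_head_tail (a : α) (l : List α) : ∃ r, dst (a :: l) = a :: r := by
  induction l generalizing a with
  | nil => exact ⟨[], rfl⟩
  | cons b t ih =>
    by_cases h : a = b
    · obtain ⟨r, hr⟩ := ih b
      exact ⟨r, by rw [dst_cons_cons_eq _ h, hr, h]⟩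
    · exact ⟨dst (b :: t), dst_cons_cons_ne _ h⟩

lemma dst_cons_ne_nil (a : α) (l : List α) : dst (a :: l) ≠ [] := by
  obtain ⟨r, hr⟩ := dst_head_tail a l; simp [hr]

lemma getLast?_dst (l : List α) : (dst l).getLast? = l.getLast? := by
  induction l with
  | nil => rfl
  | cons a t ih =>
    cases t with
    | nil => rfl
    | cons b t' =>
      by_cases h : a = b
      · rw [dst_cons_cons_eq _ h, ih, List.getLast?_cons_cons]
      · rw [dst_cons_cons_ne _ h, List.getLast?_cons_cons]
        cases hd : dst (b :: t') with
        | nil => exact absurd hd (dst_cons_ne_nil b t')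
        | cons c r => rw [← hd, ← ih, hd, List.getLast?_cons_cons]

/-- Key append lemma for `dst`. -/
lemma dst_append (F T : List α) (hF : F ≠ []) :
    dst (F ++ T) = dst F ++ dst T ∨
      ∃ g r, dst T = g :: r ∧ (dst F).getLast? = some g ∧ dst (F ++ T) = dst F ++ r := by
  induction F with
  | nil => exact absurd rfl hF
  | cons x F' ih =>
    cases F' with
    | nil =>
      cases T with
      | nil => left; simp [dst]
      | cons t T' =>
        by_cases h : x = t
        · right
          obtain ⟨r, hr⟩ := dst_head_tail t T'
          refine ⟨t, r, hr, by simp [dst, h], ?_⟩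
          simp only [List.singleton_append, dst_cons_cons_eq _ h, hr]
          simp [dst, h]
        · left
          simp only [List.singleton_append, dst_cons_cons_ne _ h]
          simp [dst]
    | cons y F'' =>
      have hne : (y :: F'') ≠ [] := by simp
      by_cases h : x = y
      · have e1 : dst (x :: y :: F'' ++ T) = dst (y :: F'' ++ T) := by
          rw [show x :: y :: F'' ++ T = x :: (y :: (F'' ++ T)) by simp,
            dst_cons_cons_eq _ h]
          rfl
        have e2 : dst (x :: y :: F'') = dst (y :: F'') := dst_cons_cons_eq _ h
        rcases ih hne with h1 | ⟨g, r, hg1, hg2, hg3⟩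
        · left; rw [e1, e2]; exact h1
        · right; exact ⟨g, r, hg1, by rw [e2]; exact hg2, by rw [e1, e2]; exact hg3⟩
      · have e1 : dst (x :: y :: F'' ++ T) = x :: dst (y :: F'' ++ T) := by
          rw [show x :: y :: F'' ++ T = x :: (y :: (F'' ++ T)) by simp,
            dst_cons_cons_ne _ h]
          rfl
        have e2 : dst (x :: y :: F'') = x :: dst (y :: F'') := dst_cons_cons_ne _ h
        rcases ih hne with h1 | ⟨g, r, hg1, hg2, hg3⟩
        · left; rw [e1, e2, h1]; rfl
        · right
          refine ⟨g, r, hg1, ?_, ?_⟩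
          · rw [e2]
            cases hd : dst (y :: F'') with
            | nil => exact absurd hd (dst_cons_ne_nil y F'')
            | cons c r' =>
              rw [hd] at hg2
              rw [List.getLast?_cons_cons]
              exact hg2
          · rw [e1, e2, hg3]; rfl

lemma dst_prefix_append (F T : List α) (hF : F ≠ []) : dst F <+: dst (F ++ T) := by
  rcases dst_append F T hF with h | ⟨g, r, _, _, h⟩
  · exact ⟨dst T, h.symm⟩
  · exact ⟨r, h.symm⟩

/-- `dst` of a factor is a factor of `dst`. -/
lemma dst_infix (U F T : List α) (hF : F ≠ []) : dst F <:+: dst (U ++ F ++ T) := by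
  have hpre : dst F <+: dst (F ++ T) := dst_prefix_append F T hF
  cases U with
  | nil => simpa using hpre.isInfix
  | cons u U' =>
    have hU : (u :: U') ≠ [] := by simp
    rw [List.append_assoc]
    rcases dst_append (u :: U') (F ++ T) hU with h | ⟨g, r, hg1, hg2, h⟩
    · exact hpre.isInfix.trans ⟨dst (u :: U'), [], by rw [List.append_nil]; exact h.symm⟩
    · have : dst (u :: U') = (dst (u :: U')).dropLast ++ [g] := by
        exact (List.dropLast_append_getLast? g hg2).symm
      have h2 : dst (u :: U' ++ (F ++ T)) = (dst (u :: U')).dropLast ++ dst (F ++ T) := by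
        rw [h, hg1]
        conv_lhs => rw [this]
        simp
      exact hpre.isInfix.trans ⟨(dst (u :: U')).dropLast, [], by
        rw [List.append_nil]; exact h2.symm⟩

lemma dst_replicate_append (m : ℕ) (hm : 0 < m) (x : α) (l : List α) :
    dst (List.replicate m x ++ l) = dst (x :: l) := by
  obtain ⟨s, rfl⟩ := Nat.exists_eq_add_of_lt hm
  rw [Nat.zero_add]
  induction s with
  | zero => rfl
  | succ s ih =>
    rw [show List.replicate (s + 1 + 1) x ++ l = x :: (List.replicate (s + 1) x ++ l) by
      simp [List.replicate_succ], show List.replicate (s+1) x ++ l = x :: (List.replicate s x ++ l) by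
      simp [List.replicate_succ], dst_cons_cons_eq _ rfl, ← ih (by omega)]
    simp [List.replicate_succ]

lemma dst_eq_singleton {l : List α} {x : α} (h : dst l = [x]) : ∀ y ∈ l, y = x := by
  induction l with
  | nil => simp
  | cons a t ih =>
    obtain ⟨r, hr⟩ := dst_head_tail a t
    have hax : a = x := by rw [hr] at h; exact (List.cons_eq_cons.mp h).1
    cases t with
    | nil => simpa using hax
    | cons b t' =>
      by_cases hab : a = b
      · rw [dst_cons_cons_eq _ hab] at h
        intro y hy
        rcases List.mem_cons.mp hy with rfl | hy
        · exact hax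
        · exact ih h _ hy
      · rw [dst_cons_cons_ne _ hab] at h
        have := (List.cons_eq_cons.mp h).2
        exact absurd this (dst_cons_ne_nil b t')

lemma dst_blowup : ∀ (ws : List (ℕ × α)), (∀ p ∈ ws, 0 < p.1) →
    List.Chain' (fun p q => p.2 ≠ q.2) ws →
    dst (ws.map (fun p => List.replicate p.1 p.2)).flatten = ws.map Prod.snd := by
  intro ws
  induction ws with
  | nil => intro _ _; rfl
  | cons p ws ih =>
    intro hpos hch
    cases ws with
    | nil =>
      simp only [List.map_cons, List.map_nil, List.flatten_cons, List.flatten_nil,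
        List.append_nil]
      rw [show List.replicate p.1 p.2 = List.replicate p.1 p.2 ++ [] by simp,
        dst_replicate_append p.1 (hpos p (by simp)) p.2 []]
      rfl
    | cons q ws' =>
      have hq : 0 < q.1 := hpos q (by simp)
      obtain ⟨s, hs⟩ := Nat.exists_eq_add_of_lt hq
      simp only [List.map_cons, List.flatten_cons]
      rw [dst_replicate_append p.1 (hpos p (by simp)) p.2 _]
      have hrest : List.replicate q.1 q.2 ++ (List.map (fun p => List.replicate p.1 p.2) ws').flatten
          = q.2 :: (List.replicate s q.2 ++ (List.map (fun p => List.replicate p.1 p.2) ws').flatten) := by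
        rw [hs]; simp [List.replicate_succ, Nat.add_comm]
      rw [hrest, dst_cons_cons_ne _ (List.isChain_cons_cons.mp hch).1, ← hrest,
        show List.replicate q.1 q.2 ++ (List.map (fun p => List.replicate p.1 p.2) ws').flatten
          = (List.map (fun p => List.replicate p.1 p.2) (q :: ws')).flatten by simp,
        ih (fun r hr => hpos r (by simp [hr])) (List.isChain_cons_cons.mp hch).2]
      rfl

end Dst

section Main
variable {α : Type*} [DecidableEq α]

lemma squareFree_chain' {l : List α} (h : SquareFree l) : List.Chain' (· ≠ ·) l := by
  induction l with
  | nil => exact List.isChain_nil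
  | cons b t ih =>
    cases t with
    | nil => exact List.isChain_singleton _
    | cons c t' =>
      show List.IsChain _ _; rw [List.isChain_cons_cons]
      refine ⟨fun hbc => h [b] (by simp) ⟨[], t', by subst hbc; simp⟩, ?_⟩
      apply ih
      intro Y hY hYinf
      exact h Y hY (hYinf.trans ⟨[b], [], by simp⟩)

theorem squares_in_blowup' {n : ℕ} (a : Fin n → α) (k : Fin n → ℕ)
    (hk : ∀ i, 0 < k i) (hsf : SquareFree (List.ofFn a))
    (V : List α) (hV : V = (List.ofFn fun i => List.replicate (k i) (a i)).flatten) :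
    ∀ X : List α, X ≠ [] → (X ++ X) <:+: V →
      ∃ (i : Fin n) (m : ℕ), 0 < m ∧ X = List.replicate m (a i) := by
  intro X hX hinf
  obtain ⟨U, T, hUT⟩ := hinf
  have hchain : List.Chain' (· ≠ ·) (List.ofFn a) := squareFree_chain' hsf
  have hdstV : dst V = List.ofFn a := by
    rw [hV]
    have hmap : (List.ofFn fun i => List.replicate (k i) (a i))
        = (List.ofFn fun i => ((k i, a i) : ℕ × α)).map (fun p => List.replicate p.1 p.2) := by
      rw [List.map_ofFn]; rfl
    have hsnd : (List.ofFn fun i => ((k i, a i) : ℕ × α)).map Prod.snd = List.ofFn a := by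
      rw [List.map_ofFn]; rfl
    rw [hmap, dst_blowup]
    · exact hsnd
    · intro p hp
      obtain ⟨i, hi⟩ := List.mem_ofFn.mp hp
      rw [← hi]; exact hk i
    · show List.IsChain _ _; rw [← List.isChain_map Prod.snd, hsnd]; exact hchain
  obtain ⟨x, X', rfl⟩ := List.exists_cons_of_ne_nil hX
  obtain ⟨r, hr⟩ := dst_head_tail x X'
  have hsq : dst ((x :: X') ++ (x :: X')) <:+: List.ofFn a := by
    rw [← hdstV, ← hUT]
    exact dst_infix U _ T (by simp)
  have hrnil : r = [] := by
    by_contra hrne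
    rcases dst_append (x :: X') (x :: X') (by simp) with h | ⟨g, r2, hg1, hg2, h⟩
    · rw [h] at hsq
      exact hsf (dst (x :: X')) (dst_cons_ne_nil x X') hsq
    · rw [hr] at hg1
      have e := List.cons_eq_cons.mp hg1
      have hinf2 : (r ++ r) <:+: dst ((x :: X') ++ (x :: X')) :=
        ⟨[x], [], by rw [h, hr, ← e.2]; simp⟩
      exact hsf r hrne (hinf2.trans hsq)
  have hconst : ∀ y ∈ x :: X', y = x := dst_eq_singleton (by rw [hr, hrnil])
  have hxV : x ∈ V := by
    have hsub : (x :: X') <:+: V := ⟨U, (x :: X') ++ T, by rw [← hUT]; simp⟩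
    exact hsub.subset (by simp)
  obtain ⟨i, hi⟩ : ∃ i, x = a i := by
    rw [hV, List.mem_flatten] at hxV
    obtain ⟨l, hl, hxl⟩ := hxV
    obtain ⟨i, hi⟩ := List.mem_ofFn.mp hl
    exact ⟨i, by rw [← hi] at hxl; exact List.eq_of_mem_replicate hxl⟩
  refine ⟨i, (x :: X').length, by simp, ?_⟩
  exact List.eq_replicate_iff.mpr ⟨rfl, fun y hy => (hconst y hy).trans hi⟩

end Main

/-- If `W = a 0 ⋯ a (n-1)` is square-free and `V = (a 0)^{k 0} ⋯ (a (n-1))^{k (n-1)}`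
with all `k i > 0`, then every square `X ++ X` occurring in `V` is a power of a single
letter: `X = x ^ m` for some `m > 0` and some letter `x = a i`. -/
theorem squares_in_blowup {α : Type*} (n : ℕ) (a : Fin n → α) (k : Fin n → ℕ)
    (hk : ∀ i, 0 < k i) (hsf : SquareFree (List.ofFn a))
    (V : List α) (hV : V = (List.ofFn fun i => List.replicate (k i) (a i)).flatten) :
    ∀ X : List α, X ≠ [] → (X ++ X) <:+: V →
      ∃ (i : Fin n) (m : ℕ), 0 < m ∧ X = List.replicate m (a i) := by
  letI := Classical.decEq α
  exact squares_in_blowup' a k hk hsf V hV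
end
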